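/- arXiv:2111.06055 — 3 statements merged into one kernel-verified Lean document; each statement's English description precedes it below -/
import Mathlib

section
/- Suppose a dynamical system (X,f) is transitive and has the shadowing property, and f has a periodic point of period l. Then there exist n dividing l and a regular periodic decomposition 𝒟 = {D_0,D_1,…,D_{n−1}} for f such that the D_i are pairwise disjoint, f^n restricted to each D_i is mixing, and (D_i, f^n|_{D_i}) has the shadowing property for every i ∈ {0,1,…,n−1}. -/
open Filter Topology MeasureTheory
open scoped ENNReal NNReal

section TransDef

variable {X : Type*} [MetricSpace X]

/-- Topological transitivity. -/
def TopTransitive (f : X → X) : Prop :=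
  ∀ U V : Set X, IsOpen U → IsOpen V → U.Nonempty → V.Nonempty →
    ∃ n : ℕ, 1 ≤ n ∧ (U ∩ f^[n] ⁻¹' V).Nonempty

end TransDef

section Shadow

variable {X : Type*} [MetricSpace X]

/-- The shadowing property. -/
def Shadowing (f : X → X) : Prop :=
  ∀ ε > (0:ℝ), ∃ δ > (0:ℝ), ∀ x : ℕ → X,
    (∀ n, dist (x (n + 1)) (f (x n)) < δ) →
    ∃ y : X, ∀ n, dist (f^[n] y) (x n) < ε

end Shadow

section ShadowOn

variable {X : Type*} [MetricSpace X]

/-- The shadowing property of the subsystem `(A, f|_A)`. -/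
def ShadowingOn (f : X → X) (A : Set X) : Prop :=
  ∀ ε > (0:ℝ), ∃ δ > (0:ℝ), ∀ x : ℕ → X, (∀ n, x n ∈ A) →
    (∀ n, dist (x (n + 1)) (f (x n)) < δ) →
    ∃ y ∈ A, ∀ n, dist (f^[n] y) (x n) < ε

end ShadowOn

section MixOn

variable {X : Type*} [MetricSpace X]

/-- Mixing of the subsystem `(A, f|_A)`. -/
def MixingOn (f : X → X) (A : Set X) : Prop :=
  ∀ U V : Set X, IsOpen U → IsOpen V → (U ∩ A).Nonempty → (V ∩ A).Nonempty →
    ∃ N : ℕ, ∀ n ≥ N, (U ∩ A ∩ f^[n] ⁻¹' V).Nonempty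

end MixOn

section Decomp

variable {X : Type*} [MetricSpace X]

/-- A regular periodic decomposition `D 0, …, D (n-1)` for `f`. -/
def RegPeriodicDecomp (f : X → X) (n : ℕ) (D : ℕ → Set X) : Prop :=
  (∀ i < n, f '' D i ⊆ D ((i + 1) % n)) ∧
  (∀ i < n, IsClosed (D i)) ∧
  (⋃ i ∈ Finset.range n, D i) = Set.univ ∧
  (∀ i < n, ∀ j < n, i ≠ j → IsNowhereDense (D i ∩ D j)) ∧
  (∀ i < n, D i = closure (interior (D i)))

end Decomp

section RPDAuxSec
open Metric Set
namespace RPDAux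

variable {X : Type*} [MetricSpace X]

/-- An `ε`-pseudo-orbit chain of length `m` from `x` to `y`. -/
def FChain (f : X → X) (ε : ℝ) (m : ℕ) (x y : X) : Prop :=
  ∃ c : ℕ → X, c 0 = x ∧ c m = y ∧ ∀ t < m, dist (c (t + 1)) (f (c t)) < ε

lemma fchain_mono {f : X → X} {ε ε' : ℝ} {m : ℕ} {x y : X} (h : ε ≤ ε')
    (hc : FChain f ε m x y) : FChain f ε' m x y := by
  obtain ⟨c, h0, hm, hs⟩ := hc
  exact ⟨c, h0, hm, fun t ht => lt_of_lt_of_le (hs t ht) h⟩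

lemma fchain_concat {f : X → X} {ε : ℝ} {m k : ℕ} {x y z : X}
    (h1 : FChain f ε m x y) (h2 : FChain f ε k y z) : FChain f ε (m + k) x z := by
  obtain ⟨c, hc0, hcm, hc⟩ := h1
  obtain ⟨d, hd0, hdk, hd⟩ := h2
  refine ⟨fun t => if t < m then c t else d (t - m), ?_, ?_, ?_⟩
  · by_cases h : 0 < m
    · simp only [if_pos h]; exact hc0
    · have hm0 : m = 0 := by omega
      simp only [if_neg (by omega : ¬ (0:ℕ) < m)]
      simp only [hm0] at hcm ⊢
      rw [Nat.sub_zero, hd0, ← hcm, hc0]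
  · simp only [if_neg (by omega : ¬ m + k < m)]
    rw [show m + k - m = k by omega, hdk]
  · intro t ht
    rcases lt_or_ge t m with h | h
    · have e1 : (if t < m then c t else d (t - m)) = c t := if_pos h
      have e2 : (if t + 1 < m then c (t + 1) else d (t + 1 - m)) = c (t + 1) := by
        rcases lt_or_ge (t + 1) m with h' | h'
        · exact if_pos h'
        · have ht1 : t + 1 = m := by omega
          rw [if_neg (by omega), ht1, Nat.sub_self, hd0, hcm]
      simp only [e1, e2]
      exact hc t h
    · have e1 : (if t < m then c t else d (t - m)) = d (t - m) := if_neg (by omega)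
      have e2 : (if t + 1 < m then c (t + 1) else d (t + 1 - m)) = d (t - m + 1) := by
        rw [if_neg (by omega), show t + 1 - m = t - m + 1 by omega]
      simp only [e1, e2]
      exact hd (t - m) (by omega)

lemma fchain_orbit {f : X → X} {ε : ℝ} (hε : 0 < ε) (x : X) (m : ℕ) :
    FChain f ε m x (f^[m] x) := by
  refine ⟨fun t => f^[t] x, rfl, rfl, fun t _ => ?_⟩
  show dist (f^[t+1] x) (f (f^[t] x)) < ε
  rw [Function.iterate_succ_apply' f t x, dist_self]
  exact hε

lemma fchain_extend {f : X → X} {ε : ℝ} {m : ℕ} {x y : X} (hε : 0 < ε)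
    (h : FChain f ε m x y) : FChain f ε (m + 1) x (f y) := by
  have := fchain_concat h (show FChain f ε 1 y (f^[1] y) from fchain_orbit hε y 1)
  simpa using this

lemma fchain_endpoint {f : X → X} {ε ε' : ℝ} {m : ℕ} {x y y' : X}
    (h : FChain f ε m x y) (hm : 1 ≤ m) (h' : dist y' y < ε') :
    FChain f (ε + ε') m x y' := by
  obtain ⟨c, hc0, hcm, hc⟩ := h
  refine ⟨fun t => if t = m then y' else c t, ?_, ?_, ?_⟩
  · show (if 0 = m then y' else c 0) = x
    rw [if_neg (by omega)]; exact hc0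
  · show (if m = m then y' else c m) = y'
    rw [if_pos rfl]
  · intro t ht
    have e1 : (if t = m then y' else c t) = c t := if_neg (by omega)
    rcases eq_or_ne (t + 1) m with h1 | h1
    · have e2 : (if t + 1 = m then y' else c (t + 1)) = y' := if_pos h1
      simp only [e1, e2]
      calc dist y' (f (c t)) ≤ dist y' y + dist y (f (c t)) := dist_triangle _ _ _
        _ < ε' + ε := by
            have : dist y (f (c t)) < ε := by rw [← hcm, ← h1]; exact hc t ht
            exact add_lt_add h' this
        _ = ε + ε' := by ring
    · have e2 : (if t + 1 = m then y' else c (t + 1)) = c (t + 1) := if_neg h1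
      simp only [e1, e2]
      exact lt_of_lt_of_le (hc t ht) (by linarith [dist_nonneg (x := y') (y := y)])





lemma chain_transitive [CompactSpace X] {f : X → X} (hf : Continuous f)
    (htrans : TopTransitive f) {ε : ℝ} (hε : 0 < ε) (x y : X) :
    ∃ m : ℕ, 1 ≤ m ∧ FChain f ε m x y := by
  obtain ⟨δ₁, hδ₁, hmod⟩ := Metric.uniformContinuous_iff.mp
    (CompactSpace.uniformContinuous_of_continuous hf) (ε/2) (half_pos hε)
  set δ := min δ₁ (ε/2) with hδdef
  have hδ : 0 < δ := lt_min hδ₁ (half_pos hε)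
  have hδε : δ ≤ ε/2 := min_le_right _ _
  have hmod' : ∀ a b : X, dist a b < δ → dist (f a) (f b) < ε/2 := fun a b h =>
    hmod (lt_of_lt_of_le h (min_le_left _ _))
  -- finite cover by balls of radius δ/2
  obtain ⟨s, hs⟩ := isCompact_univ.elim_finite_subcover (fun p : X => ball p (δ/2))
    (fun p => isOpen_ball) (fun z _ => mem_iUnion.mpr ⟨z, mem_ball_self (half_pos hδ)⟩)
  obtain ⟨p, hp, hxp⟩ := mem_iUnion₂.mp (hs (mem_univ x))
  obtain ⟨q, hq, hyq⟩ := mem_iUnion₂.mp (hs (mem_univ y))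
  obtain ⟨m, hm1, u, huU, huV⟩ := htrans (ball p (δ/2)) (ball q (δ/2)) isOpen_ball isOpen_ball
    ⟨p, mem_ball_self (half_pos hδ)⟩ ⟨q, mem_ball_self (half_pos hδ)⟩
  refine ⟨m, hm1, fun t => if t = 0 then x else if t = m then y else f^[t] u, by simp, ?_, ?_⟩
  · have hm0 : ¬ m = 0 := by omega
    simp [hm0]
  · have hfux : dist (f u) (f x) < ε/2 := by
      apply hmod'
      calc dist u x ≤ dist u p + dist p x := dist_triangle _ _ _
        _ < δ/2 + δ/2 := by
            rw [mem_ball] at huU hxp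
            exact add_lt_add huU (by rw [dist_comm]; exact hxp)
        _ = δ := by ring
    have hyfu : dist y (f^[m] u) < δ := by
      rw [mem_preimage, mem_ball] at huV
      rw [mem_ball] at hyq
      calc dist y (f^[m] u) ≤ dist y q + dist q (f^[m] u) := dist_triangle _ _ _
        _ < δ/2 + δ/2 := add_lt_add hyq (by rw [dist_comm]; exact huV)
        _ = δ := by ring
    intro t ht
    rcases eq_or_lt_of_le hm1 with hm | hm
    · -- m = 1, so t = 0
      have ht0 : t = 0 := by omega
      subst ht0
      simp only [if_pos rfl, if_neg (by omega : ¬ (0:ℕ)+1 = 0), ← hm, if_pos rfl]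
      calc dist y (f x) ≤ dist y (f^[1] u) + dist (f^[1] u) (f x) := dist_triangle _ _ _
        _ < δ + ε/2 := by
            rw [Function.iterate_one]
            exact add_lt_add (by rw [← hm] at hyfu; simpa using hyfu) hfux
        _ ≤ ε := by linarith
    · rcases eq_or_ne t 0 with ht0 | ht0
      · subst ht0
        simp only [if_pos rfl, if_neg (by omega : ¬ (0:ℕ)+1 = 0),
          if_neg (by omega : ¬ (0:ℕ)+1 = m)]
        rw [Function.iterate_one]
        calc dist (f u) (f x) < ε/2 := hfux
          _ < ε := by linarith
      · rcases eq_or_ne (t+1) m with htm | htm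
        · simp only [if_neg ht0, if_neg (by omega : ¬ t = m), if_neg (by omega : ¬ t+1 = 0),
            if_pos htm]
          have : f (f^[t] u) = f^[m] u := by
            rw [← Function.iterate_succ_apply' f t u]
            exact congrArg (fun k => f^[k] u) htm
          rw [this]
          exact lt_of_lt_of_le hyfu (by linarith)
        · simp only [if_neg ht0, if_neg (by omega : ¬ t = m), if_neg (by omega : ¬ t+1 = 0),
            if_neg htm]
          rw [Function.iterate_succ_apply' f t u, dist_self]
          exact hε

lemma pseudo_of_fchain {f : X → X} {ε : ℝ} {L : ℕ} {u v : X} (hε : 0 < ε)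
    (h : FChain f ε L u v) :
    ∃ x : ℕ → X, x 0 = u ∧ x L = v ∧ ∀ t, dist (x (t + 1)) (f (x t)) < ε := by
  obtain ⟨c, hc0, hcL, hc⟩ := h
  refine ⟨fun t => if t < L then c t else f^[t - L] v, ?_, ?_, ?_⟩
  · by_cases h0 : 0 < L
    · simp only [if_pos h0]; exact hc0
    · have : L = 0 := by omega
      subst this
      simp only [if_neg (by omega : ¬ (0:ℕ) < 0), Nat.sub_zero, Function.iterate_zero_apply]
      rw [← hcL, hc0]
  · simp only [if_neg (lt_irrefl L), Nat.sub_self, Function.iterate_zero_apply]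
  · intro t
    rcases lt_or_ge t L with h | h
    · have e1 : (if t < L then c t else f^[t - L] v) = c t := if_pos h
      have e2 : (if t + 1 < L then c (t+1) else f^[t+1-L] v) = c (t + 1) := by
        rcases lt_or_ge (t + 1) L with h' | h'
        · exact if_pos h'
        · have : t + 1 = L := by omega
          rw [if_neg (by omega), this, Nat.sub_self, Function.iterate_zero_apply, hcL]
      simp only [e1, e2]
      exact hc t h
    · have e1 : (if t < L then c t else f^[t - L] v) = f^[t - L] v := if_neg (by omega)
      have e2 : (if t + 1 < L then c (t+1) else f^[t+1-L] v) = f^[t - L + 1] v := by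
        rw [if_neg (by omega), show t + 1 - L = t - L + 1 by omega]
      simp only [e1, e2]
      rw [Function.iterate_succ_apply' f (t - L) v, dist_self]
      exact hε



/-- Sums of `a` copies of `x` stay in an add-closed set. -/
lemma addclosed_nsmul {A : Set ℕ} (hadd : ∀ a ∈ A, ∀ b ∈ A, a + b ∈ A)
    {x : ℕ} (hx : x ∈ A) : ∀ a : ℕ, 1 ≤ a → a * x ∈ A := by
  intro a ha
  induction a with
  | zero => omega
  | succ k ih =>
    rcases Nat.eq_or_lt_of_le ha with h | h
    · simpa [← h] using hx
    · have hk : 1 ≤ k := by omega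
      have := hadd _ (ih hk) _ hx
      simpa [Nat.succ_mul] using this

lemma addclosed_comb {A : Set ℕ} (hadd : ∀ a ∈ A, ∀ b ∈ A, a + b ∈ A)
    {p q : ℕ} (hp : p ∈ A) (hq : q ∈ A) {a b : ℕ} (hab : 1 ≤ a + b) :
    a * p + b * q ∈ A := by
  rcases Nat.eq_zero_or_pos a with ha | ha
  · subst ha
    simpa using addclosed_nsmul hadd hq b (by omega)
  · rcases Nat.eq_zero_or_pos b with hb | hb
    · subst hb
      simpa using addclosed_nsmul hadd hp a ha
    · exact hadd _ (addclosed_nsmul hadd hp a ha) _ (addclosed_nsmul hadd hq b hb)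

/-- Elements of the subgroup of `ℤ` generated by a set of naturals closed under
addition are differences of elements of `A ∪ {0}`. -/
lemma mem_closure_diff {A : Set ℕ} (hadd : ∀ a ∈ A, ∀ b ∈ A, a + b ∈ A)
    {k : ℤ} (hk : k ∈ AddSubgroup.closure ((↑) '' A : Set ℤ)) :
    ∃ a b : ℕ, (a ∈ A ∨ a = 0) ∧ (b ∈ A ∨ b = 0) ∧ k = (a : ℤ) - b := by
  induction hk using AddSubgroup.closure_induction with
  | mem x hx =>
    obtain ⟨a, ha, rfl⟩ := hx
    exact ⟨a, 0, Or.inl ha, Or.inr rfl, by simp⟩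
  | zero => exact ⟨0, 0, Or.inr rfl, Or.inr rfl, by simp⟩
  | add x y hx hy ihx ihy =>
    obtain ⟨a, b, ha, hb, rfl⟩ := ihx
    obtain ⟨a', b', ha', hb', rfl⟩ := ihy
    refine ⟨a + a', b + b', ?_, ?_, by push_cast; ring⟩
    · rcases ha with ha | ha
      · rcases ha' with ha' | ha'
        · exact Or.inl (hadd _ ha _ ha')
        · subst ha'; simpa using Or.inl ha
      · subst ha; simpa using ha'
    · rcases hb with hb | hb
      · rcases hb' with hb' | hb'
        · exact Or.inl (hadd _ hb _ hb')
        · subst hb'; simpa using Or.inl hb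
      · subst hb; simpa using hb'
  | neg x hx ihx =>
    obtain ⟨a, b, ha, hb, rfl⟩ := ihx
    exact ⟨b, a, hb, ha, by ring⟩

/-- The main arithmetic extraction: a stabilized gcd `n` for the family of loop-length
sets `S ε`, with divisibility of all loop lengths and realization of all large
multiples of `n`. -/
lemma exists_genN (S : ℝ → Set ℕ) {l : ℕ}
    (hmono : ∀ ε ε' : ℝ, 0 < ε → ε ≤ ε' → S ε ⊆ S ε')
    (hlmem : ∀ ε : ℝ, 0 < ε → l ∈ S ε)
    (hlpos : 0 < l)
    (hpos : ∀ ε : ℝ, 0 < ε → ∀ m ∈ S ε, 1 ≤ m)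
    (hadd : ∀ ε : ℝ, 0 < ε → ∀ a ∈ S ε, ∀ b ∈ S ε, a + b ∈ S ε) :
    ∃ n : ℕ, ∃ ε₀ : ℝ, 0 < n ∧ n ∣ l ∧ 0 < ε₀ ∧
      ∀ ε : ℝ, 0 < ε → ε ≤ ε₀ →
        (∀ m ∈ S ε, n ∣ m) ∧ (∃ N : ℕ, ∀ m ≥ N, m * n ∈ S ε) := by
  classical
  -- generator of the subgroup generated by S ε
  have hgen : ∀ ε : ℝ, ∃ g : ℤ,
      AddSubgroup.closure ((↑) '' S ε : Set ℤ) = AddSubgroup.closure {g} :=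
    fun ε => Int.subgroup_cyclic _
  choose g hg using hgen
  set gn : ℝ → ℕ := fun ε => (g ε).natAbs with hgn
  have hdvd : ∀ ε : ℝ, ∀ m ∈ S ε, gn ε ∣ m := by
    intro ε m hm
    have hmem : (m : ℤ) ∈ AddSubgroup.closure ((↑) '' S ε : Set ℤ) :=
      AddSubgroup.subset_closure ⟨m, hm, rfl⟩
    rw [hg ε] at hmem
    obtain ⟨z, hz⟩ := AddSubgroup.mem_closure_singleton.mp hmem
    have : g ε ∣ (m : ℤ) := ⟨z, by rw [← hz, zsmul_eq_mul, Int.cast_id, mul_comm]⟩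
    exact Int.ofNat_dvd.mp (Int.natAbs_dvd.mpr this)
  have hdvdl : ∀ ε : ℝ, 0 < ε → gn ε ∣ l := fun ε hε => hdvd ε l (hlmem ε hε)
  have hgnpos : ∀ ε : ℝ, 0 < ε → 0 < gn ε := by
    intro ε hε
    rcases Nat.eq_zero_or_pos (gn ε) with h | h
    · exfalso
      have := hdvdl ε hε
      rw [h] at this
      omega
    · exact h
  have hgnle : ∀ ε : ℝ, 0 < ε → gn ε ≤ l := fun ε hε =>
    Nat.le_of_dvd hlpos (hdvdl ε hε)
  -- divisibility monotonicity: smaller ε gives a multiple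
  have hmonodvd : ∀ ε ε' : ℝ, 0 < ε → ε ≤ ε' → gn ε' ∣ gn ε := by
    intro ε ε' hε hεε
    have hsub : ((↑) '' S ε : Set ℤ) ⊆ (↑) '' S ε' :=
      Set.image_mono (hmono ε ε' hε hεε)
    have h1 : (g ε : ℤ) ∈ AddSubgroup.closure ({g ε} : Set ℤ) :=
      AddSubgroup.subset_closure rfl
    rw [← hg ε] at h1
    have h2 : (g ε : ℤ) ∈ AddSubgroup.closure ((↑) '' S ε' : Set ℤ) :=
      AddSubgroup.closure_mono hsub h1
    rw [hg ε'] at h2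
    obtain ⟨z, hz⟩ := AddSubgroup.mem_closure_singleton.mp h2
    have : g ε' ∣ g ε := ⟨z, by rw [← hz, zsmul_eq_mul, Int.cast_id, mul_comm]⟩
    exact Int.natAbs_dvd_natAbs.mpr this
  -- find maximal value of gn
  set P : ℕ → Prop := fun d => ∃ ε : ℝ, 0 < ε ∧ gn ε = d with hP
  set n := Nat.findGreatest P l with hn
  have hPgn1 : P (gn 1) := ⟨1, one_pos, rfl⟩
  have hPn : P n := Nat.findGreatest_spec (hgnle 1 one_pos) hPgn1
  obtain ⟨ε₀, hε₀, hgnε₀⟩ := hPn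
  have hnpos : 0 < n := by
    have := Nat.le_findGreatest (hgnle 1 one_pos) hPgn1
    have := hgnpos 1 one_pos
    omega
  have hstab : ∀ ε : ℝ, 0 < ε → ε ≤ ε₀ → gn ε = n := by
    intro ε hε hεε₀
    have h1 : n ∣ gn ε := by rw [← hgnε₀]; exact hmonodvd ε ε₀ hε hεε₀
    have h2 : gn ε ≤ n := Nat.le_findGreatest (hgnle ε hε) ⟨ε, hε, rfl⟩
    have h3 : n ≤ gn ε := Nat.le_of_dvd (hgnpos ε hε) h1
    omega
  refine ⟨n, ε₀, hnpos, by rw [← hgnε₀]; exact hdvdl ε₀ hε₀, hε₀, ?_⟩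
  intro ε hε hεε₀
  have hdvdn : ∀ m ∈ S ε, n ∣ m := by
    intro m hm
    rw [← hstab ε hε hεε₀]
    exact hdvd ε m hm
  refine ⟨hdvdn, ?_⟩
  -- n is in the subgroup generated by S ε, so n = p - q with p q ∈ S ε ∪ {0}
  have hginH : (n : ℤ) ∈ AddSubgroup.closure ((↑) '' S ε : Set ℤ) := by
    have h1 : (g ε : ℤ) ∈ AddSubgroup.closure ((↑) '' S ε : Set ℤ) := by
      rw [hg ε]; exact AddSubgroup.subset_closure rfl
    have hcase : (((g ε).natAbs : ℤ) = g ε) ∨ (((g ε).natAbs : ℤ) = - g ε) := by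
      rcases Int.natAbs_eq (g ε) with h | h
      · exact Or.inl h.symm
      · exact Or.inr (by omega)
    rw [← hstab ε hε hεε₀]
    simp only [hgn]
    rcases hcase with h | h
    · rw [h]; exact h1
    · rw [h]; exact AddSubgroup.neg_mem _ h1
  obtain ⟨a, b, ha, hb, hab⟩ := mem_closure_diff (hadd ε hε) hginH
  -- shift by l to land in S ε
  have haS : a + l ∈ S ε := by
    rcases ha with ha | ha
    · exact hadd ε hε a ha l (hlmem ε hε)
    · subst ha; simpa using hlmem ε hε
  have hbS : b + l ∈ S ε := by
    rcases hb with hb | hb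
    · exact hadd ε hε b hb l (hlmem ε hε)
    · subst hb; simpa using hlmem ε hε
  set p := a + l with hpdef
  set q := b + l with hqdef
  have hpq : p = q + n := by
    have : (a : ℤ) = b + n := by omega
    have : a = b + n := by exact_mod_cast this
    omega
  have hqdvd : n ∣ q := hdvdn q hbS
  obtain ⟨q', hq'⟩ := hqdvd
  have hq'pos : 1 ≤ q' := by
    have : 1 ≤ q := hpos ε hε q hbS
    rcases Nat.eq_zero_or_pos q' with h | h
    · exfalso; rw [h, Nat.mul_zero] at hq'; omega
    · exact h
  refine ⟨q' * q', fun m hm => ?_⟩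
  -- write m * n = a' * p + b' * q
  set a' := m % q' with ha'def
  set k := m / q' with hkdef
  have ha'lt : a' < q' := Nat.mod_lt _ (by omega)
  have hkge : q' ≤ k := (Nat.le_div_iff_mul_le (by omega)).mpr hm
  set b' := k - a' with hb'def
  have hab' : a' + b' = k := by omega
  have hcomb : a' * p + b' * q = m * n := by
    have hdm : q' * k + a' = m := Nat.div_add_mod m q'
    calc a' * p + b' * q = a' * (q + n) + b' * q := by rw [hpq]
      _ = (a' + b') * q + a' * n := by ring
      _ = k * (n * q') + a' * n := by rw [hab', hq']
      _ = (q' * k + a') * n := by ring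
      _ = m * n := by rw [hdm]
  rw [← hcomb]
  exact addclosed_comb (hadd ε hε) haS hbS (by omega)

end RPDAux
end RPDAuxSec

theorem exists_regPeriodicDecomp
    {X : Type*} [MetricSpace X] [CompactSpace X] [Nontrivial X]
    (f : X → X) (hf : Continuous f)
    (htrans : TopTransitive f) (hshadow : Shadowing f)
    (x₀ : X) (l : ℕ) (hl : 0 < l) (hx₀ : f^[l] x₀ = x₀) :
    ∃ n : ℕ, 0 < n ∧ n ∣ l ∧ ∃ D : ℕ → Set X,
      RegPeriodicDecomp f n D ∧
      (∀ i < n, ∀ j < n, i ≠ j → D i ∩ D j = ∅) ∧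
      (∀ i < n, MixingOn (f^[n]) (D i)) ∧
      (∀ i < n, ShadowingOn (f^[n]) (D i)) := by
  classical
  -- the family of loop-length sets at x₀
  set S : ℝ → Set ℕ := fun ε => {m | 1 ≤ m ∧ RPDAux.FChain f ε m x₀ x₀} with hS
  have hSmono : ∀ ε ε' : ℝ, 0 < ε → ε ≤ ε' → S ε ⊆ S ε' := by
    intro ε ε' hε hεε' m hm
    exact ⟨hm.1, RPDAux.fchain_mono hεε' hm.2⟩
  have hSl : ∀ ε : ℝ, 0 < ε → l ∈ S ε := by
    intro ε hε
    refine ⟨hl, ?_⟩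
    have h := RPDAux.fchain_orbit (f := f) hε x₀ l
    rwa [hx₀] at h
  have hSpos : ∀ ε : ℝ, 0 < ε → ∀ m ∈ S ε, 1 ≤ m := fun ε _ m hm => hm.1
  have hSadd : ∀ ε : ℝ, 0 < ε → ∀ a ∈ S ε, ∀ b ∈ S ε, a + b ∈ S ε := by
    intro ε hε a ha b hb
    have h1 := ha.1
    have h2 := hb.1
    exact ⟨by omega, RPDAux.fchain_concat ha.2 hb.2⟩
  obtain ⟨n, ε₀, hnpos, hnl, hε₀, hmain⟩ := RPDAux.exists_genN S hSmono hSl hl hSpos hSadd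
  have hloopdvd : ∀ ε : ℝ, 0 < ε → ε ≤ ε₀ → ∀ m, 1 ≤ m →
      RPDAux.FChain f ε m x₀ x₀ → n ∣ m := by
    intro ε hε hεε₀ m hm1 hmc
    exact (hmain ε hε hεε₀).1 m ⟨hm1, hmc⟩
  have hlarge : ∀ ε : ℝ, 0 < ε → ε ≤ ε₀ → ∃ N, ∀ m ≥ N, m * n ∈ S ε :=
    fun ε hε hεε₀ => (hmain ε hε hεε₀).2
  have hct : ∀ ε : ℝ, 0 < ε → ∀ x y : X, ∃ m, 1 ≤ m ∧ RPDAux.FChain f ε m x y :=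
    fun ε hε x y => RPDAux.chain_transitive hf htrans hε x y
  -- residue uniqueness
  have huniq : ∀ ε₁ ε₂ : ℝ, 0 < ε₁ → ε₁ ≤ ε₀ → 0 < ε₂ → ε₂ ≤ ε₀ →
      ∀ (m₁ m₂ : ℕ) (x : X), 1 ≤ m₁ → 1 ≤ m₂ →
      RPDAux.FChain f ε₁ m₁ x₀ x → RPDAux.FChain f ε₂ m₂ x₀ x → m₁ % n = m₂ % n := by
    intro ε₁ ε₂ hε₁ hε₁₀ hε₂ hε₂₀ m₁ m₂ x hm₁ hm₂ hc₁ hc₂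
    obtain ⟨a, ha1, hca⟩ := hct ε₀ hε₀ x x₀
    have l1 : n ∣ m₁ + a := hloopdvd ε₀ hε₀ le_rfl (m₁ + a) (by omega)
      (RPDAux.fchain_concat (RPDAux.fchain_mono hε₁₀ hc₁) hca)
    have l2 : n ∣ m₂ + a := hloopdvd ε₀ hε₀ le_rfl (m₂ + a) (by omega)
      (RPDAux.fchain_concat (RPDAux.fchain_mono hε₂₀ hc₂) hca)
    have h1' : m₁ + a ≡ 0 [MOD n] := Nat.modEq_zero_iff_dvd.mpr l1
    have h2' : m₂ + a ≡ 0 [MOD n] := Nat.modEq_zero_iff_dvd.mpr l2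
    exact Nat.ModEq.add_right_cancel' a (h1'.trans h2'.symm)
  -- the decomposition pieces
  set D : ℕ → Set X := fun i =>
    {x | ∀ ε : ℝ, 0 < ε → ∃ m, 1 ≤ m ∧ m % n = i ∧ RPDAux.FChain f ε m x₀ x} with hD
  have hmemD : ∀ x : X, ∃ i, i < n ∧ x ∈ D i := by
    intro x
    obtain ⟨m₀, hm₀1, hc₀⟩ := hct ε₀ hε₀ x₀ x
    refine ⟨m₀ % n, Nat.mod_lt _ hnpos, ?_⟩
    intro ε hε
    obtain ⟨m, hm1, hc⟩ := hct (min ε ε₀) (lt_min hε hε₀) x₀ x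
    exact ⟨m, hm1,
      huniq (min ε ε₀) ε₀ (lt_min hε hε₀) (min_le_right _ _) hε₀ le_rfl m m₀ x hm1 hm₀1 hc hc₀,
      RPDAux.fchain_mono (min_le_left _ _) hc⟩
  have hdisj : ∀ i < n, ∀ j < n, i ≠ j → D i ∩ D j = ∅ := by
    intro i hi j hj hij
    by_contra h
    obtain ⟨x, hxi, hxj⟩ := Set.nonempty_iff_ne_empty.mpr h
    obtain ⟨m₁, h₁1, h₁r, h₁c⟩ := hxi ε₀ hε₀
    obtain ⟨m₂, h₂1, h₂r, h₂c⟩ := hxj ε₀ hε₀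
    exact hij (h₁r ▸ h₂r ▸ huniq ε₀ ε₀ hε₀ le_rfl hε₀ le_rfl m₁ m₂ x h₁1 h₂1 h₁c h₂c)
  have hclosed : ∀ i, IsClosed (D i) := by
    intro i
    apply isClosed_of_closure_subset
    intro x hx
    intro ε hε
    obtain ⟨x', hx', hdist⟩ := Metric.mem_closure_iff.mp hx (ε/2) (half_pos hε)
    obtain ⟨m, hm1, hmr, hmc⟩ := hx' (ε/2) (half_pos hε)
    refine ⟨m, hm1, hmr, ?_⟩
    have := RPDAux.fchain_endpoint hmc hm1 (show dist x x' < ε/2 from hdist)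
    rwa [add_halves] at this
  have hcover : (⋃ i ∈ Finset.range n, D i) = Set.univ := by
    apply Set.eq_univ_of_forall
    intro x
    obtain ⟨i, hi, hxD⟩ := hmemD x
    simp only [Set.mem_iUnion]
    exact ⟨i, Finset.mem_range.mpr hi, hxD⟩
  have hopen : ∀ i, i < n → IsOpen (D i) := by
    intro i hi
    rw [← isClosed_compl_iff]
    have hcompl : (D i)ᶜ = ⋃ j ∈ (Finset.range n).erase i, D j := by
      ext x
      simp only [Set.mem_compl_iff, Set.mem_iUnion, Finset.mem_erase, Finset.mem_range,
        exists_prop]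
      constructor
      · intro hx
        obtain ⟨j, hj, hxD⟩ := hmemD x
        exact ⟨j, ⟨fun h => hx (h ▸ hxD), hj⟩, hxD⟩
      · rintro ⟨j, ⟨hji, hj⟩, hxD⟩ hxi
        have hempty := hdisj i hi j hj (Ne.symm hji)
        exact Set.notMem_empty x (hempty ▸ Set.mem_inter hxi hxD)
    rw [hcompl]
    exact Set.Finite.isClosed_biUnion (Finset.finite_toSet _) (fun j _ => hclosed j)
  -- Lebesgue number for the cover by the (cl)open sets D i
  obtain ⟨r, hr, hleb⟩ := lebesgue_number_lemma_of_metric (s := (Set.univ : Set X))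
    (c := fun j : Fin n => D (j : ℕ)) isCompact_univ (fun j => hopen j j.isLt)
    (by
      intro x _
      obtain ⟨i, hi, hxD⟩ := hmemD x
      exact Set.mem_iUnion.mpr ⟨⟨i, hi⟩, hxD⟩)
  have hin : ∀ (x y : X) (i : ℕ), i < n → x ∈ D i → dist y x < r → y ∈ D i := by
    intro x y i hi hx hxy
    obtain ⟨j, hballs⟩ := hleb x (Set.mem_univ x)
    have hxj : x ∈ D (j : ℕ) := hballs (Metric.mem_ball_self hr)
    have hij : i = (j : ℕ) := by
      by_contra hne
      have hempty := hdisj i hi (j : ℕ) j.isLt hne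
      exact Set.notMem_empty x (hempty ▸ Set.mem_inter hx hxj)
    rw [hij]
    exact hballs (Metric.mem_ball.mpr hxy)
  -- images
  have hDf : ∀ i, i < n → f '' D i ⊆ D ((i + 1) % n) := by
    rintro i hi _ ⟨x, hx, rfl⟩
    intro ε hε
    obtain ⟨m, hm1, hmr, hmc⟩ := hx ε hε
    refine ⟨m + 1, by omega, ?_, RPDAux.fchain_extend hε hmc⟩
    rw [Nat.add_mod m 1 n, Nat.add_mod i 1 n, hmr, Nat.mod_eq_of_lt hi]
  -- connecting chains of length exactly m * n between points of the same piece
  have hconn : ∀ ε : ℝ, 0 < ε → ε ≤ ε₀ → ∀ i, i < n → ∀ u, u ∈ D i → ∀ v, v ∈ D i →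
      ∃ N, ∀ m ≥ N, RPDAux.FChain f ε (m * n) u v := by
    intro ε hε hεε₀ i hi u hu v hv
    obtain ⟨a, ha1, har, hac⟩ := hu ε hε
    obtain ⟨b, hb1, hbc⟩ := hct ε hε u x₀
    obtain ⟨c, hc1, hcr, hcc⟩ := hv ε hε
    have hab : n ∣ a + b := hloopdvd ε hε hεε₀ (a + b) (by omega)
      (RPDAux.fchain_concat hac hbc)
    have hbc' : n ∣ b + c := by
      have h1 : a + b ≡ 0 [MOD n] := Nat.modEq_zero_iff_dvd.mpr hab
      have h2 : c ≡ a [MOD n] := by show c % n = a % n; rw [hcr, har]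
      have h3 : b + c ≡ b + a [MOD n] := Nat.ModEq.add_left b h2
      have h4 : b + a ≡ 0 [MOD n] := by rwa [Nat.add_comm a b] at h1
      exact Nat.modEq_zero_iff_dvd.mp (h3.trans h4)
    obtain ⟨w, hw⟩ := hbc'
    obtain ⟨N₀, hN₀⟩ := hlarge ε hε hεε₀
    refine ⟨N₀ + w + 1, fun m hm => ?_⟩
    have hwm : w ≤ m := by omega
    have hloopc : RPDAux.FChain f ε ((m - w) * n) x₀ x₀ := (hN₀ (m - w) (by omega)).2
    have htot := RPDAux.fchain_concat hbc (RPDAux.fchain_concat hloopc hcc)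
    have hlen : b + ((m - w) * n + c) = m * n := by
      have h5 : m * n = (m - w) * n + w * n := by
        calc m * n = ((m - w) + w) * n := by rw [Nat.sub_add_cancel hwm]
          _ = (m - w) * n + w * n := by ring
      have h6 : b + c = w * n := by rw [hw]; ring
      calc b + ((m - w) * n + c) = (m - w) * n + (b + c) := by ring
        _ = (m - w) * n + w * n := by rw [h6]
        _ = m * n := h5.symm
    rwa [hlen] at htot
  -- mixing
  have hmix : ∀ i < n, MixingOn (f^[n]) (D i) := by
    intro i hi U V hU hV hUD hVD
    obtain ⟨u, huU, huD⟩ := hUD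
    obtain ⟨v, hvV, hvD⟩ := hVD
    obtain ⟨εu, hεu, hbu⟩ := Metric.isOpen_iff.mp hU u huU
    obtain ⟨εv, hεv, hbv⟩ := Metric.isOpen_iff.mp hV v hvV
    set ε := min (min εu εv) r with hεdef
    have hε : 0 < ε := lt_min (lt_min hεu hεv) hr
    obtain ⟨δ, hδ, hsh⟩ := hshadow ε hε
    set δ' := min δ ε₀ with hδ'def
    have hδ' : 0 < δ' := lt_min hδ hε₀
    obtain ⟨N, hN⟩ := hconn δ' hδ' (min_le_right _ _) i hi u huD v hvD
    refine ⟨N, fun m hm => ?_⟩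
    obtain ⟨z, hz0, hzL, hzstep⟩ := RPDAux.pseudo_of_fchain hδ' (hN m hm)
    obtain ⟨y, hy⟩ := hsh z (fun t => lt_of_lt_of_le (hzstep t) (min_le_left _ _))
    have hy0 : dist y u < ε := by
      have := hy 0
      rwa [Function.iterate_zero_apply, hz0] at this
    have hyD : y ∈ D i := hin u y i hi huD (lt_of_lt_of_le hy0 (min_le_right _ _))
    have hymn : dist (f^[m * n] y) v < ε := by
      have := hy (m * n)
      rwa [hzL] at this
    refine ⟨y, ⟨⟨hbu ?_, hyD⟩, ?_⟩⟩
    · exact Metric.mem_ball.mpr (lt_of_lt_of_le hy0 (le_trans (min_le_left _ _) (min_le_left _ _)))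
    · show y ∈ (f^[n])^[m] ⁻¹' V
      rw [Set.mem_preimage, ← Function.iterate_mul, Nat.mul_comm n m]
      exact hbv (Metric.mem_ball.mpr
        (lt_of_lt_of_le hymn (le_trans (min_le_left _ _) (min_le_right _ _))))
  -- shadowing on the pieces
  have hshadOn : ∀ i < n, ShadowingOn (f^[n]) (D i) := by
    intro i hi ε' hε'
    set ε := min ε' r with hεdef
    have hε : 0 < ε := lt_min hε' hr
    obtain ⟨δ, hδ, hsh⟩ := hshadow ε hε
    refine ⟨δ, hδ, ?_⟩
    intro x hxD hxstep
    set z : ℕ → X := fun t => f^[t % n] (x (t / n)) with hz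
    have hzstep : ∀ t, dist (z (t + 1)) (f (z t)) < δ := by
      intro t
      simp only [hz]
      set k := t / n with hk
      set s := t % n with hs
      have hsn : s < n := Nat.mod_lt _ hnpos
      have htks : t = n * k + s := by rw [hk, hs]; exact (Nat.div_add_mod t n).symm
      rcases lt_or_ge (s + 1) n with hlt | hge
      · have ht1 : t + 1 = n * k + (s + 1) := by omega
        have e1 : (t + 1) % n = s + 1 := by
          rw [ht1, Nat.mul_add_mod, Nat.mod_eq_of_lt hlt]
        have e2 : (t + 1) / n = k := by
          rw [ht1, Nat.mul_add_div hnpos, Nat.div_eq_of_lt hlt, Nat.add_zero]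
        rw [e1, e2]
        have hstep : f^[s + 1] (x k) = f (f^[s] (x k)) := Function.iterate_succ_apply' f s (x k)
        rw [hstep, dist_self]
        exact hδ
      · have hsn1 : s + 1 = n := by omega
        have e0 : t + 1 = n * (k + 1) := by
          calc t + 1 = n * k + (s + 1) := by rw [htks, Nat.add_assoc]
            _ = n * k + n := by rw [hsn1]
            _ = n * (k + 1) := by ring
        have e1 : (t + 1) % n = 0 := by rw [e0]; exact Nat.mul_mod_right n (k + 1)
        have e2 : (t + 1) / n = k + 1 := by rw [e0]; exact Nat.mul_div_cancel_left _ hnpos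
        rw [e1, e2, Function.iterate_zero_apply]
        have hstep : f (f^[s] (x k)) = f^[n] (x k) :=
          (Function.iterate_succ_apply' f s (x k)).symm.trans
            (congrArg (fun j => f^[j] (x k)) hsn1)
        rw [hstep]
        exact hxstep k
    obtain ⟨y, hy⟩ := hsh z hzstep
    have hz0 : z 0 = x 0 := by simp only [hz, Nat.zero_mod, Nat.zero_div, Function.iterate_zero_apply]
    have hyD : y ∈ D i := by
      apply hin (x 0) y i hi (hxD 0)
      have := hy 0
      rw [Function.iterate_zero_apply, hz0] at this
      exact lt_of_lt_of_le this (min_le_right _ _)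
    refine ⟨y, hyD, fun k => ?_⟩
    have hzk : z (n * k) = x k := by
      simp only [hz, Nat.mul_mod_right, Nat.mul_div_cancel_left _ hnpos,
        Function.iterate_zero_apply]
    have := hy (n * k)
    rw [hzk] at this
    rw [← Function.iterate_mul]
    exact lt_of_lt_of_le this (min_le_left _ _)
  refine ⟨n, hnpos, hnl, D, ⟨hDf, fun i _ => hclosed i, hcover, ?_, ?_⟩, hdisj, hmix, hshadOn⟩
  · intro i hi j hj hij
    rw [hdisj i hi j hj hij]
    simp [IsNowhereDense]
  · intro i hi
    rw [IsOpen.interior_eq (hopen i hi), IsClosed.closure_eq (hclosed i)]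
end

section
/- Let X ⊆ {0,1,…,n−1}^{ℕ+} be a subshift, equipped with the metric d(ω,γ) = n^{−min{k ∈ ℕ+ : ω_k ≠ γ_k}} for ω ≠ γ and d(ω,ω) = 0. If (X,σ) has the shadowing property, then (X,σ) has the exponential shadowing property with exponent λ = ln n. -/
open Filter Topology MeasureTheory
open scoped ENNReal NNReal

section ExpShadowOn

variable {X : Type*} [MetricSpace X]

/-- The exponential shadowing property of the subsystem `(A, f|_A)` with exponent `lam`. -/
def ExpShadowingOnWith (f : X → X) (A : Set X) (lam : ℝ) : Prop :=
  ∀ ε > (0:ℝ), ∃ δ > (0:ℝ), ∀ x : ℕ → X, ∀ L : ℕ → ℕ,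
    (∀ k, x k ∈ A) → (∀ k, 1 ≤ L k) →
    (∀ k, dist (f^[L k] (x k)) (x (k + 1)) < δ) →
    ∃ y ∈ A, ∀ k : ℕ, ∀ j : ℕ, j ≤ L k - 1 →
      dist (f^[(∑ i ∈ Finset.range k, L i) + j] y) (f^[j] (x k)) <
        ε * Real.exp (-(min j (L k - 1 - j) : ℕ) * lam)

end ExpShadowOn

/-- The one-sided shift map on sequences. -/
def shiftMap (m : ℕ) : (ℕ → Fin m) → (ℕ → Fin m) := fun ω k => ω (k + 1)

lemma shiftMap_iterate (m : ℕ) (n : ℕ) (ω : ℕ → Fin m) (k : ℕ) :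
    (shiftMap m)^[n] ω k = ω (k + n) := by
  induction n generalizing ω with
  | zero => rfl
  | succ n ih =>
    rw [Function.iterate_succ_apply, ih]
    show ω (k + n + 1) = ω (k + (n + 1))
    exact congrArg ω (by omega)

/-- From distance smaller than `m ^ (-(N+1))`, agreement of the first `N+1` coordinates. -/
lemma agree_of_dist_lt {m : ℕ} (hm : 2 ≤ m) [MetricSpace (ℕ → Fin m)]
    (hdist : ∀ ω γ : ℕ → Fin m, ω ≠ γ →
      dist ω γ = (m : ℝ) ^ (-(Int.ofNat (sInf {k : ℕ | ω k ≠ γ k}) + 1)))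
    (ω γ : ℕ → Fin m) (N : ℕ)
    (h : dist ω γ < (m : ℝ) ^ (-(N + 1) : ℤ)) :
    ∀ i ≤ N, ω i = γ i := by
  intro i hi
  by_contra hne
  have hωγ : ω ≠ γ := fun he => hne (congrFun he i)
  have hK : sInf {k : ℕ | ω k ≠ γ k} ≤ i := Nat.sInf_le hne
  have hm1 : (1:ℝ) ≤ m := by exact_mod_cast le_trans (by norm_num) hm
  have hle : (m : ℝ) ^ (-(N + 1) : ℤ) ≤
      (m : ℝ) ^ (-(Int.ofNat (sInf {k : ℕ | ω k ≠ γ k}) + 1)) := by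
    apply zpow_le_zpow_right₀ hm1
    have h3 : Int.ofNat (sInf {k : ℕ | ω k ≠ γ k}) =
        ((sInf {k : ℕ | ω k ≠ γ k} : ℕ) : ℤ) := rfl
    rw [h3]
    have h2 : ((sInf {k : ℕ | ω k ≠ γ k} : ℕ) : ℤ) ≤ (N : ℤ) := by
      exact_mod_cast le_trans hK hi
    omega
  rw [hdist ω γ hωγ] at h
  linarith

/-- From agreement of the first `M+1` coordinates, a distance bound. -/
lemma dist_le_of_agree {m : ℕ} (hm : 2 ≤ m) [MetricSpace (ℕ → Fin m)]
    (hdist : ∀ ω γ : ℕ → Fin m, ω ≠ γ →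
      dist ω γ = (m : ℝ) ^ (-(Int.ofNat (sInf {k : ℕ | ω k ≠ γ k}) + 1)))
    (ω γ : ℕ → Fin m) (M : ℕ)
    (h : ∀ t ≤ M, ω t = γ t) :
    dist ω γ ≤ (m : ℝ) ^ (-(M + 2) : ℤ) := by
  have hm0 : (0:ℝ) < m := by positivity
  by_cases hωγ : ω = γ
  · rw [hωγ, dist_self]
    positivity
  · rw [hdist ω γ hωγ]
    have hne : {k : ℕ | ω k ≠ γ k}.Nonempty := by
      rcases Function.ne_iff.mp hωγ with ⟨k, hk⟩
      exact ⟨k, hk⟩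
    have hKmem : sInf {k : ℕ | ω k ≠ γ k} ∈ {k : ℕ | ω k ≠ γ k} := Nat.sInf_mem hne
    have hKM : M < sInf {k : ℕ | ω k ≠ γ k} := by
      by_contra hle
      push_neg at hle
      exact hKmem (h _ hle)
    apply zpow_le_zpow_right₀ (by exact_mod_cast le_trans (by norm_num) hm)
    have h3 : Int.ofNat (sInf {k : ℕ | ω k ≠ γ k}) =
        ((sInf {k : ℕ | ω k ≠ γ k} : ℕ) : ℤ) := rfl
    rw [h3]
    have h2 : (M : ℤ) < ((sInf {k : ℕ | ω k ≠ γ k} : ℕ) : ℤ) := by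
      exact_mod_cast hKM
    omega

theorem subshift_expShadowing_of_shadowing
    (m : ℕ) (hm : 2 ≤ m) [MetricSpace (ℕ → Fin m)]
    (hdist : ∀ ω γ : ℕ → Fin m, ω ≠ γ →
      dist ω γ = (m : ℝ) ^ (-(Int.ofNat (sInf {k : ℕ | ω k ≠ γ k}) + 1)))
    (S : Set (ℕ → Fin m)) (hSne : S.Nonempty) (hScl : IsClosed S)
    (hSinv : Set.MapsTo (shiftMap m) S S)
    (hshadow : ShadowingOn (shiftMap m) S) :
    ExpShadowingOnWith (shiftMap m) S (Real.log m) := by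
  intro ε hε
  have hm0 : (0:ℝ) < m := by positivity
  have hm1 : (1:ℝ) < m := by exact_mod_cast lt_of_lt_of_le (by norm_num) hm
  -- choose N with m^{-(N+2)} < ε
  obtain ⟨N, hN⟩ := exists_pow_lt_of_lt_one hε (inv_lt_one_of_one_lt₀ hm1)
  have hNε : (m : ℝ) ^ (-(N + 2) : ℤ) < ε := by
    have h1 : (m : ℝ) ^ (-(N + 2) : ℤ) ≤ (m : ℝ) ^ (-(N : ℤ)) :=
      zpow_le_zpow_right₀ hm1.le (by omega)
    have h2 : (m : ℝ) ^ (-(N : ℤ)) = ((m : ℝ)⁻¹) ^ N := by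
      rw [zpow_neg, zpow_natCast, inv_pow]
    linarith [h2 ▸ h1]
  set η := (m : ℝ) ^ (-(N + 1) : ℤ) with hηdef
  have hη : 0 < η := zpow_pos hm0 _
  obtain ⟨δ, hδ, hsh⟩ := hshadow η hη
  refine ⟨δ, hδ, ?_⟩
  intro x L hxS hL hjump
  -- the partial sums
  set c : ℕ → ℕ := fun k => ∑ i ∈ Finset.range k, L i with hcdef
  have hcsucc : ∀ k, c (k + 1) = c k + L k := fun k => Finset.sum_range_succ _ _
  have hcmono : ∀ a b, a ≤ b → c a ≤ c b := by
    intro a b hab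
    exact Finset.sum_le_sum_of_subset (Finset.range_subset_range.mpr hab)
  have hk_le : ∀ k, k ≤ c k := by
    intro k
    induction k with
    | zero => exact Nat.zero_le _
    | succ k ih => rw [hcsucc k]; have := hL k; omega
  -- the segment index of time n
  set K : ℕ → ℕ := fun n => Nat.findGreatest (fun k => c k ≤ n) n with hKdef
  have hK1 : ∀ n, c (K n) ≤ n := by
    intro n
    exact Nat.findGreatest_spec (P := fun k => c k ≤ n) (n := n) (m := 0) (Nat.zero_le n)
      (by show c 0 ≤ n; rw [show c 0 = 0 from Finset.sum_range_zero L]; exact Nat.zero_le n)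
  have hK2 : ∀ n, n < c (K n + 1) := by
    intro n
    by_contra hcon
    push_neg at hcon
    have hKn : K n + 1 ≤ n := le_trans (hk_le (K n + 1)) hcon
    exact Nat.findGreatest_is_greatest (Nat.lt_succ_self (K n)) hKn hcon
  have hKuniq : ∀ n k, c k ≤ n → n < c (k + 1) → K n = k := by
    intro n k h1 h2
    rcases lt_trichotomy (K n) k with h | h | h
    · have ha : c (K n + 1) ≤ c k := hcmono _ _ (by omega)
      have hb := hK2 n
      omega
    · exact h
    · have ha : c (k + 1) ≤ c (K n) := hcmono _ _ (by omega)
      have hb := hK1 n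
      omega
  -- the pseudo-orbit
  set z : ℕ → (ℕ → Fin m) := fun n => (shiftMap m)^[n - c (K n)] (x (K n)) with hzdef
  have hz : ∀ k j, j < L k → z (c k + j) = (shiftMap m)^[j] (x k) := by
    intro k j hj
    have hKck : K (c k + j) = k := by
      apply hKuniq
      · omega
      · rw [hcsucc k]; omega
    simp only [hzdef, hKck]
    congr 1
    omega
  have hzS : ∀ n, z n ∈ S := fun n => (hSinv.iterate _) (hxS _)
  have hzp : ∀ n, dist (z (n + 1)) (shiftMap m (z n)) < δ := by
    intro n
    set k := K n with hk
    set j := n - c k with hj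
    have hK1' : c k ≤ n := hK1 n
    have hK2' : n < c (k + 1) := hK2 n
    have hn1 : n = c k + j := by omega
    have hjL : j < L k := by
      rw [hcsucc k] at hK2'; omega
    have hzn : z n = (shiftMap m)^[j] (x k) := by rw [hn1]; exact hz k j hjL
    by_cases hcase : j + 1 < L k
    · have : z (n + 1) = (shiftMap m)^[j + 1] (x k) := by
        have : n + 1 = c k + (j + 1) := by omega
        rw [this]; exact hz k (j + 1) hcase
      rw [this, hzn, Function.iterate_succ_apply', dist_self]
      exact hδ
    · have hjL' : j + 1 = L k := by omega
      have : z (n + 1) = x (k + 1) := by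
        have hn2 : n + 1 = c (k + 1) + 0 := by rw [hcsucc k]; omega
        rw [hn2, hz (k + 1) 0 (hL (k + 1))]
        rfl
      have he : shiftMap m ((shiftMap m)^[j] (x k)) = (shiftMap m)^[L k] (x k) := by
        rw [← hjL', Function.iterate_succ_apply']
      rw [this, hzn, he, dist_comm]
      exact hjump k
  -- apply shadowing
  obtain ⟨y, hyS, hy⟩ := hsh z hzS hzp
  refine ⟨y, hyS, ?_⟩
  intro k j hj
  have hLk := hL k
  have hjLk : j < L k := by omega
  -- agreement along the whole segment
  have hagree : ∀ r, r ≤ L k - 1 + N → y (c k + r) = x k r := by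
    intro r hr
    set s := min r (L k - 1) with hs
    have hsL : s < L k := by omega
    have hiN : r - s ≤ N := by omega
    have h1 : dist ((shiftMap m)^[c k + s] y) ((shiftMap m)^[s] (x k)) < η := by
      have := hy (c k + s)
      rwa [hz k s hsL] at this
    have h2 := agree_of_dist_lt hm hdist _ _ N h1 (r - s) hiN
    rw [shiftMap_iterate, shiftMap_iterate] at h2
    have e1 : r - s + (c k + s) = c k + r := by omega
    have e2 : r - s + s = r := by omega
    rw [e1, e2] at h2
    exact h2
  -- the two sides agree on many coordinates
  have key : ∀ t, t ≤ (L k - 1 - j) + N →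
      ((shiftMap m)^[c k + j] y) t = ((shiftMap m)^[j] (x k)) t := by
    intro t ht
    rw [shiftMap_iterate, shiftMap_iterate]
    have := hagree (j + t) (by omega)
    have e1 : c k + (j + t) = t + (c k + j) := by omega
    have e2 : j + t = t + j := by omega
    rw [e1, e2] at this
    exact this
  have hdab := dist_le_of_agree hm hdist _ _ _ key
  -- final numeric estimate
  set μ := min j (L k - 1 - j) with hμ
  have hexp : Real.exp (-(μ : ℝ) * Real.log m) = (m : ℝ) ^ (-(μ : ℤ)) := by
    rw [zpow_neg, zpow_natCast, ← Real.exp_log (x := (m:ℝ)^μ) (by positivity),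
      Real.log_pow, neg_mul, Real.exp_neg]
  have hmain : ((m : ℝ)) ^ (-((L k - 1 - j : ℕ) + N : ℤ) - 2) ≤
      (m : ℝ) ^ (-(N + 2) : ℤ) * (m : ℝ) ^ (-(μ : ℤ)) := by
    rw [← zpow_add₀ (ne_of_gt hm0)]
    apply zpow_le_zpow_right₀ hm1.le
    have hμle : μ ≤ L k - 1 - j := min_le_right _ _
    have : (μ : ℤ) ≤ ((L k - 1 - j : ℕ) : ℤ) := by exact_mod_cast hμle
    omega
  have hfin : (m : ℝ) ^ (-(N + 2) : ℤ) * (m : ℝ) ^ (-(μ : ℤ)) <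
      ε * (m : ℝ) ^ (-(μ : ℤ)) := by
    apply mul_lt_mul_of_pos_right hNε (zpow_pos hm0 _)
  calc dist ((shiftMap m)^[(∑ i ∈ Finset.range k, L i) + j] y) ((shiftMap m)^[j] (x k))
      = dist ((shiftMap m)^[c k + j] y) ((shiftMap m)^[j] (x k)) := rfl
    _ ≤ (m : ℝ) ^ (-((L k - 1 - j : ℕ) + N : ℤ) - 2) := by
        convert hdab using 2
        push_cast
        ring
    _ ≤ (m : ℝ) ^ (-(N + 2) : ℤ) * (m : ℝ) ^ (-(μ : ℤ)) := hmain
    _ < ε * (m : ℝ) ^ (-(μ : ℤ)) := hfin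
    _ = ε * Real.exp (-(μ : ℕ) * Real.log m) := by rw [hexp]
end

section
/- Consider the two-sided full shift ({0,1}^ℤ, σ) with the metric d₁(ω,γ) = max{1/(|n|+1) : n ∈ ℤ, ω_n ≠ γ_n} for ω ≠ γ and d₁(ω,ω) = 0. (1) If α ∈ 𝒜 satisfies limsup_{n→∞} α(n)/ln n < ∞, then there is no pair x,y ∈ {0,1}^ℤ that is α-DC1-scrambled. (2) If α ∈ 𝒜 satisfies liminf_{n→∞} α(n)/ln n = ∞, then there exists an uncountable set in {0,1}^ℤ in which every pair of distinct points is α-DC1-scrambled. -/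
open Filter Topology MeasureTheory
open scoped ENNReal NNReal

section Chaos

variable {X : Type*} [MetricSpace X]

/-- `Φ_{xy}^{(n)}(t,f)`: the fraction of times `0 ≤ i ≤ n-1` at which the orbits of
`x` and `y` are `t`-close. -/
noncomputable def PhiN (f : X → X) (x y : X) (t : ℝ) (n : ℕ) : ℝ :=
  ((Finset.range n).filter (fun i => dist (f^[i] x) (f^[i] y) < t)).card / n

/-- `Φ_{xy}(t,f) = liminf_n Φ_{xy}^{(n)}(t,f)`. -/
noncomputable def PhiInf (f : X → X) (x y : X) (t : ℝ) : ℝ :=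
  Filter.liminf (fun n => PhiN f x y t n) Filter.atTop

/-- `Φ*_{xy}(t,f) = limsup_n Φ_{xy}^{(n)}(t,f)`. -/
noncomputable def PhiSup (f : X → X) (x y : X) (t : ℝ) : ℝ :=
  Filter.limsup (fun n => PhiN f x y t n) Filter.atTop

/-- `Φ_{xy}^{(n)}(t,f,α)`. -/
noncomputable def PhiNA (f : X → X) (x y : X) (t : ℝ) (α : ℕ → ℝ) (n : ℕ) : ℝ :=
  ((Finset.Icc 1 n).filter
    (fun i => ∑ j ∈ Finset.range i, dist (f^[j] x) (f^[j] y) < α i * t)).card / n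

/-- `Φ*_{xy}(t,f,α) = limsup_n Φ_{xy}^{(n)}(t,f,α)`. -/
noncomputable def PhiSupA (f : X → X) (x y : X) (t : ℝ) (α : ℕ → ℝ) : ℝ :=
  Filter.limsup (fun n => PhiNA f x y t α n) Filter.atTop

/-- The class `𝒜` of nondecreasing maps `α : ℕ → [0,∞)` with `α(n) → ∞` and `α(n)/n → 0`. -/
def MemA (α : ℕ → ℝ) : Prop :=
  Monotone α ∧ (∀ n, 0 ≤ α n) ∧ Tendsto α atTop atTop ∧
    Tendsto (fun n : ℕ => α n / n) atTop (nhds 0)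

/-- A pair `x, y` is DC1-scrambled. -/
def DC1Scrambled (f : X → X) (x y : X) : Prop :=
  (∃ t₀ > (0:ℝ), PhiInf f x y t₀ = 0) ∧ ∀ t > (0:ℝ), PhiSup f x y t = 1

/-- A pair `x, y` is `α`-DC1-scrambled. -/
def ADC1Scrambled (f : X → X) (α : ℕ → ℝ) (x y : X) : Prop :=
  (∃ t₀ > (0:ℝ), PhiInf f x y t₀ = 0) ∧ ∀ t > (0:ℝ), PhiSupA f x y t α = 1

/-- A set is 1-chaotic if it contains an uncountable DC1-scrambled set. -/
def OneChaotic (f : X → X) (Y : Set X) : Prop :=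
  ∃ S : Set X, S ⊆ Y ∧ ¬ S.Countable ∧
    ∀ x ∈ S, ∀ y ∈ S, x ≠ y → DC1Scrambled f x y

/-- A set is strongly distributional chaotic if, for every `α ∈ 𝒜`, it contains an
uncountable `α`-DC1-scrambled set. -/
def StronglyDistributionalChaotic (f : X → X) (Y : Set X) : Prop :=
  ∀ α : ℕ → ℝ, MemA α → ∃ S : Set X, S ⊆ Y ∧ ¬ S.Countable ∧
    ∀ x ∈ S, ∀ y ∈ S, x ≠ y → ADC1Scrambled f α x y

end Chaos

/-- The two-sided shift map on `{0,1}^ℤ`. -/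
def shiftZ : (ℤ → Fin 2) → (ℤ → Fin 2) := fun ω k => ω (k + 1)


lemma shiftZ_iterate (x : ℤ → Fin 2) (j : ℕ) (k : ℤ) : (shiftZ^[j] x) k = x (k + j) := by
  induction j generalizing x k with
  | zero => simp
  | succ n ih =>
    rw [Function.iterate_succ_apply, ih]
    simp only [shiftZ]
    congr 1
    push_cast
    ring

section D
variable [MetricSpace (ℤ → Fin 2)]
variable (hdist : ∀ ω γ : ℤ → Fin 2, ω ≠ γ →
      dist ω γ = sSup {r : ℝ | ∃ n : ℤ, ω n ≠ γ n ∧ r = 1 / (|(n : ℝ)| + 1)})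

include hdist

lemma dist_le_of (ω γ : ℤ → Fin 2) (B : ℝ) (hB : 0 ≤ B)
    (h : ∀ n : ℤ, ω n ≠ γ n → 1 / (|(n : ℝ)| + 1) ≤ B) : dist ω γ ≤ B := by
  by_cases hωγ : ω = γ
  · simpa [hωγ] using hB
  rw [hdist _ _ hωγ]
  apply Real.sSup_le _ hB
  rintro r ⟨n, hn, rfl⟩
  exact h n hn

lemma le_dist_of (ω γ : ℤ → Fin 2) (n : ℤ) (h : ω n ≠ γ n) :
    1 / (|(n : ℝ)| + 1) ≤ dist ω γ := by
  have hne : ω ≠ γ := fun e => h (congrFun e n)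
  rw [hdist _ _ hne]
  apply le_csSup
  · refine ⟨1, ?_⟩
    rintro r ⟨m, hm, rfl⟩
    rw [div_le_one (by positivity)]
    have := abs_nonneg ((m : ℝ)); linarith
  · exact ⟨n, h, rfl⟩

lemma dist_le_one (ω γ : ℤ → Fin 2) : dist ω γ ≤ 1 := by
  apply dist_le_of hdist _ _ _ zero_le_one
  intro n _
  rw [div_le_one (by positivity)]
  have := abs_nonneg ((n : ℝ)); linarith

end D

lemma log_le_harmonic (n : ℕ) : Real.log (n + 1) ≤ ∑ j ∈ Finset.range n, 1 / ((j : ℝ) + 1) := by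
  induction n with
  | zero => simp
  | succ n ih =>
    rw [Finset.sum_range_succ]
    have h1 : Real.log ((n + 2 : ℝ) / (n + 1)) ≤ 1 / ((n : ℝ) + 1) := by
      have := Real.log_le_sub_one_of_pos (show (0:ℝ) < ((n:ℝ) + 2) / ((n:ℝ) + 1) by positivity)
      have he : ((n:ℝ) + 2) / ((n:ℝ) + 1) - 1 = 1 / ((n:ℝ)+1) := by
        rw [div_sub_one (by positivity)]
        norm_num
      linarith [he ▸ this]
    have h2 : Real.log ((n + 2 : ℝ) / (n + 1)) = Real.log ((n:ℝ)+2) - Real.log ((n:ℝ)+1) := by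
      rw [Real.log_div (by positivity) (by positivity)]
    have h3 := h2 ▸ h1
    have hc : Real.log ((n+1 : ℕ) + 1) = Real.log ((n:ℝ)+2) := by push_cast; ring_nf
    rw [hc]
    linarith

lemma harmonic_le_log (n : ℕ) (hn : 1 ≤ n) :
    ∑ j ∈ Finset.range n, 1 / ((j : ℝ) + 1) ≤ 1 + Real.log n := by
  induction n with
  | zero => omega
  | succ n ih =>
    rcases Nat.eq_or_lt_of_le hn with h1 | h1
    · simp [← h1]
    have hn' : 1 ≤ n := by omega
    rw [Finset.sum_range_succ]
    have h1 : Real.log (((n:ℝ) + 1) / n) ≥ 1 / ((n : ℝ) + 1) := by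
      have := Real.log_le_sub_one_of_pos (show (0:ℝ) < (n:ℝ) / ((n:ℝ) + 1) by
        have : (0:ℝ) < n := by exact_mod_cast hn'
        positivity)
      have he : (n:ℝ) / ((n:ℝ) + 1) - 1 = -(1 / ((n:ℝ)+1)) := by field_simp; ring
      have h2 : Real.log ((n:ℝ) / ((n:ℝ)+1)) = - Real.log (((n:ℝ)+1)/(n:ℝ)) := by
        rw [← Real.log_inv]
        congr 1
        have : (0:ℝ) < n := by exact_mod_cast hn'
        field_simp
      rw [h2, he] at this
      linarith
    have h2 : Real.log (((n:ℝ) + 1) / n) = Real.log ((n:ℝ)+1) - Real.log (n:ℝ) := by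
      have : (0:ℝ) < n := by exact_mod_cast hn'
      rw [Real.log_div (by positivity) (by positivity)]
    have h3 := h2 ▸ h1
    have hc : Real.log ((n+1:ℕ)) = Real.log ((n:ℝ)+1) := by norm_num
    rw [hc]
    linarith [ih hn']

section P1
variable [MetricSpace (ℤ → Fin 2)]
variable (hdist : ∀ ω γ : ℤ → Fin 2, ω ≠ γ →
      dist ω γ = sSup {r : ℝ | ∃ n : ℤ, ω n ≠ γ n ∧ r = 1 / (|(n : ℝ)| + 1)})

lemma PhiN_nonneg (f : (ℤ → Fin 2) → (ℤ → Fin 2)) (x y t n) : 0 ≤ PhiN f x y t n := by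
  unfold PhiN; positivity

lemma PhiNA_nonneg (f : (ℤ → Fin 2) → (ℤ → Fin 2)) (x y t α n) : 0 ≤ PhiNA f x y t α n := by
  unfold PhiNA; positivity

lemma PhiN_le_one (f : (ℤ → Fin 2) → (ℤ → Fin 2)) (x y t n) : PhiN f x y t n ≤ 1 := by
  unfold PhiN
  rcases Nat.eq_zero_or_pos n with h | h
  · simp [h]
  rw [div_le_one (by exact_mod_cast h)]
  exact_mod_cast le_trans (Finset.card_filter_le _ _) (by simp)

lemma PhiNA_le_one (f : (ℤ → Fin 2) → (ℤ → Fin 2)) (x y t α n) : PhiNA f x y t α n ≤ 1 := by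
  unfold PhiNA
  rcases Nat.eq_zero_or_pos n with h | h
  · simp [h]
  rw [div_le_one (by exact_mod_cast h)]
  calc (((Finset.Icc 1 n).filter _).card : ℝ) ≤ (((Finset.Icc 1 n)).card : ℝ) := by
        exact_mod_cast Finset.card_filter_le _ _
    _ ≤ (n : ℝ) := by simp

include hdist

lemma part1 (α : ℕ → ℝ) (hα : MemA α)
    (hbd : Filter.IsBoundedUnder (· ≤ ·) Filter.atTop fun n : ℕ => α n / Real.log n)
    (x y : ℤ → Fin 2) : ¬ ADC1Scrambled shiftZ α x y := by
  rintro ⟨⟨t₀, ht₀, hinf⟩, hsup⟩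
  by_cases hxy : x = y
  · subst hxy
    have hPhiN : ∀ᶠ n in atTop, PhiN shiftZ x x t₀ n = 1 := by
      filter_upwards [eventually_gt_atTop 0] with n hn
      unfold PhiN
      rw [Finset.filter_true_of_mem (fun i _ => by simpa using ht₀), Finset.card_range]
      exact div_self (by exact_mod_cast hn.ne')
    have h1 : PhiInf shiftZ x x t₀ = 1 := by
      unfold PhiInf
      rw [liminf_congr hPhiN, liminf_const]
    rw [hinf] at h1; norm_num at h1
  · obtain ⟨p, hp⟩ := Function.ne_iff.mp hxy
    set q : ℝ := |(p : ℝ)| + 1 with hq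
    have hq1 : 1 ≤ q := le_add_of_nonneg_left (abs_nonneg _)
    have hq0 : 0 < q := lt_of_lt_of_le one_pos hq1
    -- lower bound on the ergodic sums
    have hsum : ∀ i : ℕ, Real.log (i + 1) / q ≤
        ∑ j ∈ Finset.range i, dist (shiftZ^[j] x) (shiftZ^[j] y) := by
      intro i
      have hterm : ∀ j ∈ Finset.range i, 1 / (((j:ℝ) + 1) * q) ≤
          dist (shiftZ^[j] x) (shiftZ^[j] y) := by
        intro j _
        have hd : (shiftZ^[j] x) (p - j) ≠ (shiftZ^[j] y) (p - j) := by
          rw [shiftZ_iterate, shiftZ_iterate]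
          simpa using hp
        refine le_trans ?_ (le_dist_of hdist (shiftZ^[j] x) (shiftZ^[j] y) (p - j) hd)  -- careful: le_dist_of args
        have habs : |((p - (j:ℤ) : ℤ) : ℝ)| + 1 ≤ ((j:ℝ) + 1) * q := by
          push_cast
          have h1 : |(p:ℝ) - (j:ℝ)| ≤ |(p:ℝ)| + (j:ℝ) := by
            calc |(p:ℝ) - (j:ℝ)| ≤ |(p:ℝ)| + |(j:ℝ)| := abs_sub _ _
              _ = |(p:ℝ)| + (j:ℝ) := by rw [abs_of_nonneg (by positivity : (0:ℝ) ≤ (j:ℝ))]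
          have h2 : (0:ℝ) ≤ (j:ℝ) * |(p:ℝ)| := by positivity
          simp only [hq]
          nlinarith
        exact one_div_le_one_div_of_le (by positivity) habs
      calc Real.log (i + 1) / q ≤ (∑ j ∈ Finset.range i, 1 / ((j:ℝ) + 1)) / q := by
            gcongr
            exact log_le_harmonic i
        _ = ∑ j ∈ Finset.range i, 1 / (((j:ℝ) + 1) * q) := by
            rw [Finset.sum_div]
            congr 1; ext j; rw [div_div]
        _ ≤ _ := Finset.sum_le_sum hterm
    obtain ⟨M, hM⟩ := hbd
    set M' : ℝ := max M 1 with hM'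
    have hM'0 : 0 < M' := lt_of_lt_of_le one_pos (le_max_right _ _)
    set t : ℝ := 1 / (2 * M' * q) with ht
    have ht0 : 0 < t := by positivity
    have h1 := hsup t ht0
    -- eventually the defining condition of PhiNA fails
    have hev : ∀ᶠ i in atTop, ¬ (∑ j ∈ Finset.range i, dist (shiftZ^[j] x) (shiftZ^[j] y)
        < α i * t) := by
      simp only [eventually_map] at hM
      filter_upwards [hM, eventually_ge_atTop 3] with i hMi hi3
      rw [not_lt]
      have hlogi : 1 ≤ Real.log i := by
        rw [show (1:ℝ) = Real.log (Real.exp 1) by simp]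
        apply Real.log_le_log (Real.exp_pos 1)
        calc Real.exp 1 ≤ 3 := by
              have := Real.exp_one_lt_d9; linarith
          _ ≤ (i:ℝ) := by exact_mod_cast hi3
      have hαi : α i ≤ M' * Real.log i :=
        calc α i = (α i / Real.log i) * Real.log i := by field_simp
          _ ≤ M' * Real.log i := by
              apply mul_le_mul_of_nonneg_right (le_trans hMi (le_max_left _ _)) (by linarith)
      have hlogmono : Real.log i ≤ 2 * Real.log ((i:ℝ) + 1) := by
        have h1 : Real.log (i:ℝ) ≤ Real.log ((i:ℝ)+1) := by
          apply Real.log_le_log (by norm_num; omega)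
          linarith
        have h2 : (0:ℝ) ≤ Real.log ((i:ℝ)+1) := Real.log_nonneg (by norm_num)
        linarith
      calc α i * t ≤ (M' * Real.log i) * t := by
            apply mul_le_mul_of_nonneg_right hαi (le_of_lt ht0)
        _ = Real.log i / (2 * q) := by rw [ht]; field_simp
        _ ≤ Real.log ((i:ℝ)+1) / q := by
            rw [div_le_div_iff₀ (by positivity) hq0]
            nlinarith
        _ ≤ _ := by exact_mod_cast hsum i
    obtain ⟨N₁, hN₁⟩ := eventually_atTop.mp hev
    have hcard : ∀ n : ℕ, PhiNA shiftZ x y t α n ≤ N₁ / n := by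
      intro n
      unfold PhiNA
      rcases Nat.eq_zero_or_pos n with h | h
      · simp [h]
      have hsub : (Finset.Icc 1 n).filter
          (fun i => ∑ j ∈ Finset.range i, dist (shiftZ^[j] x) (shiftZ^[j] y) < α i * t)
          ⊆ Finset.Icc 1 N₁ := by
        intro i hi
        simp only [Finset.mem_filter, Finset.mem_Icc] at hi ⊢
        refine ⟨hi.1.1, ?_⟩
        by_contra hlt
        exact hN₁ i (by omega) hi.2
      have hc2 : (((Finset.Icc 1 n).filter
          (fun i => ∑ j ∈ Finset.range i, dist (shiftZ^[j] x) (shiftZ^[j] y) < α i * t)).card : ℝ)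
          ≤ (N₁ : ℝ) := by
        calc (((Finset.Icc 1 n).filter _).card : ℝ) ≤ ((Finset.Icc 1 N₁).card : ℝ) := by
              exact_mod_cast Finset.card_le_card hsub
          _ ≤ (N₁ : ℝ) := by simp
      gcongr
    have hhalf : ∀ᶠ n : ℕ in atTop, PhiNA shiftZ x y t α n ≤ 1/2 := by
      filter_upwards [eventually_ge_atTop (2 * N₁ + 1)] with n hn
      refine le_trans (hcard n) ?_
      have hn0 : (0:ℝ) < n := by exact_mod_cast (by omega : 0 < n)
      rw [div_le_iff₀ hn0]
      have h2n : (2 * N₁ + 1 : ℝ) ≤ (n:ℝ) := by exact_mod_cast hn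
      linarith
    have : PhiSupA shiftZ x y t α ≤ 1/2 := by
      unfold PhiSupA
      exact limsup_le_of_le (isCoboundedUnder_le_of_le _ (fun n => PhiNA_nonneg _ _ _ _ _ _)) hhalf
    rw [h1] at this; norm_num at this

end P1

/-! ### Part 2: block construction -/

def Ablk : ℕ → ℕ
  | 0 => 2
  | k + 1 => 3 ^ ((k + 2) * Ablk k)

def Bblk (k : ℕ) : ℕ := (k + 2) * Ablk k

lemma Ablk_two (k : ℕ) : 2 ≤ Ablk k := by
  induction k with
  | zero => simp [Ablk]
  | succ k ih =>
    show 2 ≤ 3 ^ ((k + 2) * Ablk k)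
    calc 2 ≤ 3 ^ 1 := by norm_num
      _ ≤ 3 ^ ((k + 2) * Ablk k) := Nat.pow_le_pow_right (by norm_num) (by nlinarith)

lemma Ablk_lt_Bblk (k : ℕ) : Ablk k < Bblk k := by
  have h := Ablk_two k
  unfold Bblk
  nlinarith

lemma Bblk_lt_Ablk (k : ℕ) : Bblk k < Ablk (k + 1) := by
  show Bblk k < 3 ^ ((k + 2) * Ablk k)
  exact Nat.lt_pow_self (by norm_num)

lemma Ablk_strictMono : StrictMono Ablk :=
  strictMono_nat_of_lt_succ fun k => lt_trans (Ablk_lt_Bblk k) (Bblk_lt_Ablk k)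

lemma Ablk_ge (k : ℕ) : k + 2 ≤ Ablk k := by
  induction k with
  | zero => simp [Ablk]
  | succ k ih =>
    show k + 3 ≤ 3 ^ ((k + 2) * Ablk k)
    have h1 : 2 ≤ Ablk k := Ablk_two k
    have h2 : (k + 2) * Ablk k < 3 ^ ((k + 2) * Ablk k) := Nat.lt_pow_self (by norm_num)
    nlinarith

lemma one_le_log_three : (1 : ℝ) ≤ Real.log 3 := by
  rw [show (1:ℝ) = Real.log (Real.exp 1) by simp]
  apply Real.log_le_log (Real.exp_pos 1)
  have := Real.exp_one_lt_d9; linarith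

lemma Bblk_le_log (k : ℕ) : (Bblk k : ℝ) ≤ Real.log (Ablk (k + 1)) := by
  have h : (Ablk (k+1) : ℝ) = (3:ℝ) ^ ((k + 2) * Ablk k) := by
    show ((3 ^ ((k + 2) * Ablk k) : ℕ) : ℝ) = _
    push_cast; ring
  rw [h, Real.log_pow]
  have he : (Bblk k : ℝ) = (((k + 2) * Ablk k : ℕ) : ℝ) := by norm_num [Bblk]
  rw [he]
  have h0 : (0:ℝ) ≤ (((k + 2) * Ablk k : ℕ) : ℝ) := by positivity
  nlinarith [one_le_log_three]

def inBlk (k : ℕ) (m : ℤ) : Prop := (Ablk k : ℤ) ≤ m ∧ m < (Bblk k : ℤ)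

lemma blk_disj_aux {k l : ℕ} {m : ℤ} (hk : inBlk k m) (hl : inBlk l m) (h : k < l) : False := by
  have h1 : (Bblk k : ℤ) ≤ (Ablk l : ℤ) := by
    exact_mod_cast le_trans (le_of_lt (Bblk_lt_Ablk k)) (Ablk_strictMono.monotone h)
  obtain ⟨hk1, hk2⟩ := hk
  obtain ⟨hl1, hl2⟩ := hl
  omega

lemma blk_disj {k l : ℕ} {m : ℤ} (hk : inBlk k m) (hl : inBlk l m) : k = l := by
  by_contra hne
  rcases Nat.lt_or_ge k l with h | h
  · exact blk_disj_aux hk hl h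
  · exact blk_disj_aux hl hk (lt_of_le_of_ne h (fun e => hne e.symm))

open Classical in
noncomputable def pt (c : ℕ → Bool) : ℤ → Fin 2 := fun m =>
  if ∃ k, inBlk k m ∧ c (Nat.unpair k).1 = true then 1 else 0

lemma pt_apply_of_mem (c : ℕ → Bool) {k : ℕ} {m : ℤ} (h : inBlk k m) :
    pt c m = if c (Nat.unpair k).1 = true then 1 else 0 := by
  unfold pt
  by_cases hc : c (Nat.unpair k).1 = true
  · rw [if_pos ⟨k, h, hc⟩, if_pos hc]
  · rw [if_neg, if_neg hc]
    rintro ⟨l, hl, hcl⟩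
    exact hc (blk_disj hl h ▸ hcl)

lemma pt_apply_of_not_mem (c : ℕ → Bool) {m : ℤ} (h : ∀ k, ¬ inBlk k m) : pt c m = 0 := by
  unfold pt
  rw [if_neg]
  rintro ⟨l, hl, _⟩
  exact h l hl

lemma pt_ne_iff {c c' : ℕ → Bool} {m : ℤ} :
    pt c m ≠ pt c' m ↔ ∃ k, inBlk k m ∧ c (Nat.unpair k).1 ≠ c' (Nat.unpair k).1 := by
  constructor
  · intro hne
    by_cases h : ∃ k, inBlk k m
    · obtain ⟨k, hk⟩ := h
      refine ⟨k, hk, ?_⟩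
      intro he
      apply hne
      rw [pt_apply_of_mem c hk, pt_apply_of_mem c' hk, he]
    · push_neg at h
      exact absurd (by rw [pt_apply_of_not_mem c h, pt_apply_of_not_mem c' h]) hne
  · rintro ⟨k, hk, hne⟩
    rw [pt_apply_of_mem c hk, pt_apply_of_mem c' hk]
    rcases Bool.eq_false_or_eq_true (c (Nat.unpair k).1) with h1 | h1 <;>
      rcases Bool.eq_false_or_eq_true (c' (Nat.unpair k).1) with h2 | h2 <;>
      simp [h1, h2] at hne ⊢

open Classical in
lemma not_countable_funBool : ¬ Countable (ℕ → Bool) := by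
  intro h
  obtain ⟨f, hf⟩ := (Countable.exists_injective_nat (ℕ → Bool))
  have hg : Function.Injective (fun s : Set ℕ => fun n => if n ∈ s then true else false) := by
    intro s t hst
    ext n
    have := congrFun hst n
    by_cases hs : n ∈ s <;> by_cases ht : n ∈ t <;> simp [hs, ht] at this ⊢
  exact Function.cantor_injective (f ∘ _) (hf.comp hg)

section P2
variable [MetricSpace (ℤ → Fin 2)]
variable (hdist : ∀ ω γ : ℤ → Fin 2, ω ≠ γ →
      dist ω γ = sSup {r : ℝ | ∃ n : ℤ, ω n ≠ γ n ∧ r = 1 / (|(n : ℝ)| + 1)})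

include hdist

lemma sum_bound (c c' : ℕ → Bool) (k i : ℕ) (hi : i ≤ Ablk (k + 1)) :
    ∑ j ∈ Finset.range i, dist (shiftZ^[j] (pt c)) (shiftZ^[j] (pt c'))
      ≤ (Bblk k : ℝ) + 2 + 2 * Real.log (Ablk (k + 1)) := by
  set n := Ablk (k + 1) with hn
  set Bk := Bblk k with hBk
  have hn3 : 3 ≤ n := le_trans (by omega) (Ablk_ge (k + 1))
  have hlogn : (0:ℝ) ≤ Real.log n := Real.log_nonneg (by exact_mod_cast le_trans (by norm_num) hn3)
  -- location of disagreements
  have hD : ∀ m : ℤ, pt c m ≠ pt c' m → 0 ≤ m ∧ (m < (Bk : ℤ) ∨ (n : ℤ) ≤ m) := by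
    intro m hm
    obtain ⟨l, hl, -⟩ := pt_ne_iff.mp hm
    have h0 : 0 ≤ m := le_trans (by positivity) hl.1
    refine ⟨h0, ?_⟩
    rcases Nat.lt_or_ge l (k + 1) with h | h
    · left
      have : (Bblk l : ℤ) ≤ (Bk : ℤ) := by
        have : Bblk l ≤ Bblk k := Nat.mul_le_mul (by omega) (Ablk_strictMono.monotone (by omega))
        exact_mod_cast this
      exact lt_of_lt_of_le hl.2 this
    · right
      have : (n : ℤ) ≤ (Ablk l : ℤ) := by exact_mod_cast Ablk_strictMono.monotone h
      exact le_trans this hl.1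
  -- pointwise bound
  have hpt : ∀ j ∈ Finset.range i, dist (shiftZ^[j] (pt c)) (shiftZ^[j] (pt c'))
      ≤ (if j < Bk then (1:ℝ) else 1 / (((j - Bk : ℕ) : ℝ) + 2)) + 1 / ((n - j : ℕ) : ℝ) := by
    intro j hj
    rw [Finset.mem_range] at hj
    have hjn : j < n := lt_of_lt_of_le hj hi
    have hg0 : (0:ℝ) ≤ (if j < Bk then (1:ℝ) else 1 / (((j - Bk : ℕ) : ℝ) + 2)) := by
      by_cases h : j < Bk <;> simp [h] <;> positivity
    have hnj : 0 < n - j := by omega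
    have hh0 : (0:ℝ) < ((n - j : ℕ) : ℝ) := by exact_mod_cast hnj
    apply dist_le_of hdist _ _ _ (by positivity)
    intro r hr
    rw [shiftZ_iterate, shiftZ_iterate] at hr
    obtain ⟨hm0, hcase⟩ := hD (r + j) hr
    have habs : ((|r| : ℤ) : ℝ) = |(r : ℝ)| := by push_cast [Int.cast_abs]; ring
    rcases hcase with hlt | hge
    · by_cases hjB : j < Bk
      · rw [if_pos hjB]
        have h1 : 1 / (|(r:ℝ)| + 1) ≤ 1 := by
          rw [div_le_one (by positivity)]
          have := abs_nonneg ((r:ℝ)); linarith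
        have : (0:ℝ) ≤ 1 / ((n - j : ℕ) : ℝ) := by positivity
        linarith
      · rw [if_neg hjB]
        have hjB' : Bk ≤ j := le_of_not_gt hjB
        have h1 : ((j - Bk : ℕ) : ℤ) + 2 ≤ |r| + 1 := by
          have h2 : r + (j : ℤ) < (Bk : ℤ) := hlt
          have h3 : r ≤ (Bk : ℤ) - j - 1 := by omega
          have h4 : (Bk : ℤ) ≤ (j : ℤ) := by exact_mod_cast hjB'
          have h5 : ((j - Bk : ℕ) : ℤ) = (j : ℤ) - Bk := by
            have := Nat.cast_sub hjB' (R := ℤ); omega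
          have := abs_nonneg r
          rcases abs_cases r with ⟨he, _⟩ | ⟨he, _⟩ <;> omega
        have h1' : ((j - Bk : ℕ) : ℝ) + 2 ≤ |(r:ℝ)| + 1 := by
          rw [← habs]; exact_mod_cast h1
        have h2 : 1 / (|(r:ℝ)| + 1) ≤ 1 / (((j - Bk : ℕ) : ℝ) + 2) :=
          one_div_le_one_div_of_le (by positivity) h1'
        have : (0:ℝ) ≤ 1 / ((n - j : ℕ) : ℝ) := by positivity
        linarith
    · -- n ≤ r + j : right block
      have h1 : ((n - j : ℕ) : ℤ) ≤ |r| + 1 := by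
        have h5 : ((n - j : ℕ) : ℤ) = (n : ℤ) - j := by
          have := Nat.cast_sub (le_of_lt hjn) (R := ℤ); omega
        rcases abs_cases r with ⟨he, _⟩ | ⟨he, _⟩ <;> omega
      have h1' : ((n - j : ℕ) : ℝ) ≤ |(r:ℝ)| + 1 := by
        rw [← habs]; exact_mod_cast h1
      have h2 : 1 / (|(r:ℝ)| + 1) ≤ 1 / ((n - j : ℕ) : ℝ) :=
        one_div_le_one_div_of_le hh0 h1'
      linarith [hg0]
  -- sum the two pieces
  have hsplit := Finset.sum_le_sum hpt
  rw [Finset.sum_add_distrib] at hsplit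
  have hG : ∑ j ∈ Finset.range i, (if j < Bk then (1:ℝ) else 1 / (((j - Bk : ℕ) : ℝ) + 2))
      ≤ (Bk : ℝ) + (1 + Real.log n) := by
    have hGsplit : ∀ j, (if j < Bk then (1:ℝ) else 1 / (((j - Bk : ℕ) : ℝ) + 2))
        = (if j < Bk then (1:ℝ) else 0) + (if j < Bk then 0 else 1 / (((j - Bk : ℕ) : ℝ) + 2)) := by
      intro j; by_cases h : j < Bk <;> simp [h]
    simp only [hGsplit]
    rw [Finset.sum_add_distrib]
    have h1 : ∑ j ∈ Finset.range i, (if j < Bk then (1:ℝ) else 0) ≤ (Bk : ℝ) := by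
      rw [Finset.sum_boole]
      have : (Finset.range i).filter (fun j => j < Bk) ⊆ Finset.range Bk := by
        intro j hj
        simp only [Finset.mem_filter, Finset.mem_range] at hj ⊢
        exact hj.2
      calc ((((Finset.range i).filter (fun j => j < Bk)).card : ℕ) : ℝ)
          ≤ ((Finset.range Bk).card : ℝ) := by exact_mod_cast Finset.card_le_card this
        _ = (Bk : ℝ) := by simp
    have h2 : ∑ j ∈ Finset.range i, (if j < Bk then (0:ℝ) else 1 / (((j - Bk : ℕ) : ℝ) + 2))
        ≤ 1 + Real.log n := by
      rcases le_or_gt i Bk with hiB | hiB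
      · have : ∀ j ∈ Finset.range i, (if j < Bk then (0:ℝ) else 1 / (((j - Bk : ℕ) : ℝ) + 2)) = 0 := by
          intro j hj
          rw [Finset.mem_range] at hj
          rw [if_pos (by omega)]
        rw [Finset.sum_congr rfl this]
        simp
        linarith
      · rw [Finset.range_eq_Ico, ← Finset.sum_Ico_consecutive _ (Nat.zero_le Bk) (le_of_lt hiB)]
        have hz : ∑ j ∈ Finset.Ico 0 Bk, (if j < Bk then (0:ℝ) else 1 / (((j - Bk : ℕ) : ℝ) + 2)) = 0 := by
          apply Finset.sum_eq_zero
          intro j hj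
          rw [Finset.mem_Ico] at hj
          rw [if_pos hj.2]
        rw [hz, zero_add]
        have he : ∀ j ∈ Finset.Ico Bk i, (if j < Bk then (0:ℝ) else 1 / (((j - Bk : ℕ) : ℝ) + 2))
            = 1 / (((j - Bk : ℕ) : ℝ) + 2) := by
          intro j hj
          rw [Finset.mem_Ico] at hj
          rw [if_neg (by omega)]
        rw [Finset.sum_congr rfl he, Finset.sum_Ico_eq_sum_range]
        have hterm : ∀ r ∈ Finset.range (i - Bk),
            (1:ℝ) / (((Bk + r - Bk : ℕ) : ℝ) + 2) ≤ 1 / ((r : ℝ) + 1) := by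
          intro r _
          have : (Bk + r - Bk : ℕ) = r := by omega
          rw [this]
          apply one_div_le_one_div_of_le (by positivity) (by linarith)
        refine le_trans (Finset.sum_le_sum hterm) ?_
        refine le_trans (harmonic_le_log (i - Bk) (by omega)) ?_
        have : Real.log ((i - Bk : ℕ) : ℝ) ≤ Real.log n := by
          apply Real.log_le_log (by exact_mod_cast Nat.sub_pos_of_lt hiB)
          exact_mod_cast le_trans (Nat.sub_le _ _) hi
        linarith
    linarith
  have hH : ∑ j ∈ Finset.range i, (1:ℝ) / ((n - j : ℕ) : ℝ) ≤ 1 + Real.log n := by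
    have hsub : ∑ j ∈ Finset.range i, (1:ℝ) / ((n - j : ℕ) : ℝ)
        ≤ ∑ j ∈ Finset.range n, (1:ℝ) / ((n - j : ℕ) : ℝ) := by
      apply Finset.sum_le_sum_of_subset_of_nonneg (Finset.range_subset_range.mpr hi)
      intro j _ _
      positivity
    have hrefl : ∑ j ∈ Finset.range n, (1:ℝ) / ((n - j : ℕ) : ℝ)
        = ∑ j ∈ Finset.range n, 1 / ((j : ℝ) + 1) := by
      rw [← Finset.sum_range_reflect (fun j => (1:ℝ) / ((n - j : ℕ) : ℝ)) n]
      apply Finset.sum_congr rfl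
      intro j hj
      rw [Finset.mem_range] at hj
      have : n - (n - 1 - j) = j + 1 := by omega
      rw [this]
      push_cast; ring_nf
    rw [hrefl] at hsub
    exact le_trans hsub (harmonic_le_log n (by omega))
  calc ∑ j ∈ Finset.range i, dist (shiftZ^[j] (pt c)) (shiftZ^[j] (pt c'))
      ≤ _ := hsplit
    _ ≤ ((Bk : ℝ) + (1 + Real.log n)) + (1 + Real.log n) := by linarith
    _ = (Bk : ℝ) + 2 + 2 * Real.log n := by ring

end P2

section P2C
variable [MetricSpace (ℤ → Fin 2)]
variable (hdist : ∀ ω γ : ℤ → Fin 2, ω ≠ γ →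
      dist ω γ = sSup {r : ℝ | ∃ n : ℤ, ω n ≠ γ n ∧ r = 1 / (|(n : ℝ)| + 1)})

include hdist

lemma part2scrambled (α : ℕ → ℝ)
    (htend : Tendsto (fun n : ℕ => α n / Real.log n) atTop atTop)
    (c c' : ℕ → Bool)
    (hK : ∀ N : ℕ, ∃ k ≥ N, c (Nat.unpair k).1 ≠ c' (Nat.unpair k).1) :
    ADC1Scrambled shiftZ α (pt c) (pt c') := by
  constructor
  · -- PhiInf at t₀ = 1 is zero
    refine ⟨1, one_pos, ?_⟩
    have hge : (0:ℝ) ≤ PhiInf shiftZ (pt c) (pt c') 1 := by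
      unfold PhiInf
      apply le_liminf_of_le
      · exact isCoboundedUnder_ge_of_le _ (fun n => PhiN_le_one _ _ _ _ _)
      · exact Eventually.of_forall (fun n => PhiN_nonneg _ _ _ _ _)
    have hle : ∀ ε : ℝ, 0 < ε → PhiInf shiftZ (pt c) (pt c') 1 ≤ 0 + ε := by
      intro ε hε
      rw [zero_add]
      unfold PhiInf
      apply liminf_le_of_frequently_le ?_ (isBoundedUnder_of ⟨0, fun n => PhiN_nonneg _ _ _ _ _⟩)
      rw [frequently_atTop]
      intro N
      obtain ⟨k₀, hk₀⟩ := exists_nat_gt (1 / ε)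
      obtain ⟨k, hk, hkK⟩ := hK (max k₀ N)
      have hkk₀ : k₀ ≤ k := le_trans (le_max_left _ _) hk
      have hkN : N ≤ k := le_trans (le_max_right _ _) hk
      have hkB : k ≤ Bblk k := by
        have h1 := Ablk_two k
        unfold Bblk; nlinarith
      refine ⟨Bblk k, by omega, ?_⟩
      -- PhiN at time Bblk k is at most A k / B k ≤ ε
      have hsub : (Finset.range (Bblk k)).filter
          (fun i => dist (shiftZ^[i] (pt c)) (shiftZ^[i] (pt c')) < 1) ⊆ Finset.range (Ablk k) := by
        intro i hi
        simp only [Finset.mem_filter, Finset.mem_range] at hi ⊢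
        by_contra hlt
        push_neg at hlt
        have hblk : inBlk k (i : ℤ) := ⟨by exact_mod_cast hlt, by exact_mod_cast hi.1⟩
        have hne : pt c (i : ℤ) ≠ pt c' (i : ℤ) := pt_ne_iff.mpr ⟨k, hblk, hkK⟩
        have hne' : (shiftZ^[i] (pt c)) 0 ≠ (shiftZ^[i] (pt c')) 0 := by
          rw [shiftZ_iterate, shiftZ_iterate]
          simpa using hne
        have := le_dist_of hdist (shiftZ^[i] (pt c)) (shiftZ^[i] (pt c')) 0 hne'
        norm_num at this
        linarith [hi.2]
      have hB0 : (0:ℝ) < (Bblk k : ℝ) := by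
        have := Ablk_lt_Bblk k; have := Ablk_two k
        exact_mod_cast by omega
      unfold PhiN
      rw [div_le_iff₀ hB0]
      calc ((((Finset.range (Bblk k)).filter _).card : ℕ) : ℝ)
          ≤ ((Finset.range (Ablk k)).card : ℝ) := by exact_mod_cast Finset.card_le_card hsub
        _ = (Ablk k : ℝ) := by simp
        _ ≤ ε * (Bblk k : ℝ) := by
            have hA0 : (0:ℝ) < (Ablk k : ℝ) := by
              have := Ablk_two k; exact_mod_cast by omega
            have hBe : (Bblk k : ℝ) = ((k:ℝ) + 2) * (Ablk k : ℝ) := by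
              unfold Bblk; push_cast; ring
            rw [hBe]
            have h1 : 1 / ε < (k:ℝ) + 2 := by
              have : (k₀ : ℝ) ≤ (k : ℝ) := by exact_mod_cast hkk₀
              linarith
            have h2 : 1 < ε * ((k:ℝ) + 2) := by
              rw [div_lt_iff₀ hε] at h1
              linarith
            nlinarith
    have : PhiInf shiftZ (pt c) (pt c') 1 ≤ 0 := le_of_forall_pos_le_add hle
    linarith
  · -- PhiSupA = 1 for every t > 0
    intro t ht
    apply le_antisymm
    · unfold PhiSupA
      apply limsup_le_of_le (isCoboundedUnder_le_of_le _ (fun n => PhiNA_nonneg _ _ _ _ _ _))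
      exact Eventually.of_forall (fun n => PhiNA_le_one _ _ _ _ _ _)
    · -- 1 ≤ limsup
      apply le_of_forall_pos_le_add
      intro ε hε
      rcases le_or_gt 1 ε with hε1 | hε1
      · have : (0:ℝ) ≤ PhiSupA shiftZ (pt c) (pt c') t α := by
          unfold PhiSupA
          apply le_limsup_of_frequently_le
          · exact Eventually.of_forall (fun n => PhiNA_nonneg _ _ _ _ _ _) |>.frequently
          · exact isBoundedUnder_of ⟨1, fun n => PhiNA_le_one _ _ _ _ _ _⟩
        linarith
      -- main case : ε < 1
      have hfreq : ∃ᶠ n in atTop, 1 - ε ≤ PhiNA shiftZ (pt c) (pt c') t α n := by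
        -- threshold from htend
        have h13 : ∀ᶠ i : ℕ in atTop, 13 / t ≤ α i / Real.log i :=
          htend.eventually_ge_atTop (13 / t)
        obtain ⟨N₀, hN₀⟩ := eventually_atTop.mp h13
        set N := max N₀ 3 with hNdef
        have hN3 : 3 ≤ N := le_max_right _ _
        have hαi : ∀ i : ℕ, N ≤ i → 13 * Real.log i ≤ α i * t := by
          intro i hi
          have hi3 : (3:ℕ) ≤ i := le_trans hN3 hi
          have hlogi : (0:ℝ) < Real.log i := by
            apply Real.log_pos
            exact_mod_cast by omega
          have h1 := hN₀ i (le_trans (le_max_left _ _) hi)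
          rw [div_le_div_iff₀ ht hlogi] at h1
          linarith
        rw [frequently_atTop]
        intro Q
        set d : ℕ := ⌈1 / ε⌉₊ + 1 with hd
        obtain ⟨Nk, hNk⟩ := exists_nat_ge ((N : ℝ) / ε)
        set k : ℕ := max Q (max Nk (d * d)) with hkdef
        set n : ℕ := Ablk (k + 1) with hn
        have hnk : k + 3 ≤ n := Ablk_ge (k + 1)
        have hn3 : 3 ≤ n := by omega
        have hn0 : (0:ℝ) < n := by exact_mod_cast by omega
        have hlogn : (1:ℝ) ≤ Real.log n := by
          rw [show (1:ℝ) = Real.log (Real.exp 1) by simp]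
          apply Real.log_le_log (Real.exp_pos 1)
          have := Real.exp_one_lt_d9
          have : (3:ℝ) ≤ (n:ℝ) := by exact_mod_cast hn3
          linarith [Real.exp_one_lt_d9]
        -- N ≤ ε n
        have hNn : (N : ℝ) ≤ ε * n := by
          have h1 : (N:ℝ)/ε ≤ (Nk:ℝ) := hNk
          have h2 : (Nk : ℝ) ≤ (n : ℝ) := by
            have : Nk ≤ k := le_trans (le_max_left _ _) (le_max_right _ _)
            exact_mod_cast by omega
          rw [div_le_iff₀ hε] at h1
          nlinarith
        -- sqrt n ≤ ε n
        set s : ℕ := Nat.sqrt n with hs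
        have hds : d ≤ s := by
          rw [hs, Nat.le_sqrt]
          have : d * d ≤ k := le_trans (le_max_right _ _) (le_max_right _ _)
          omega
        have hsn : (s : ℝ) ≤ ε * n := by
          have hs2 : (s:ℝ) * (s:ℝ) ≤ (n:ℝ) := by exact_mod_cast Nat.sqrt_le n
          have hd1 : 1 / ε ≤ (d : ℝ) := by
            rw [hd]; push_cast
            linarith [Nat.le_ceil (1/ε)]
          have hds' : (d:ℝ) ≤ (s:ℝ) := by exact_mod_cast hds
          have h1ε : 1 ≤ ε * s := by
            rw [div_le_iff₀ hε] at hd1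
            nlinarith
          nlinarith
        set m : ℕ := max N (s + 1) with hm
        have hmn : m ≤ n := by
          have h1 : N ≤ n := by
            have := hNn
            have : (N:ℝ) ≤ (n:ℝ) := by nlinarith
            exact_mod_cast this
          have h2 : s + 1 ≤ n := by
            have := Nat.sqrt_lt_self (show 1 < n by omega)
            omega
          omega
        -- good indices
        have hgood : ∀ i : ℕ, m ≤ i → i ≤ n →
            ∑ j ∈ Finset.range i, dist (shiftZ^[j] (pt c)) (shiftZ^[j] (pt c')) < α i * t := by
          intro i hmi hin
          have hsumb := sum_bound hdist c c' k i hin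
          have hBlog := Bblk_le_log k
          have hNi : N ≤ i := le_trans (le_max_left _ _) hmi
          have h13i := hαi i hNi
          have hlogi : Real.log n ≤ 2 * Real.log i := by
            have hi0 : (0:ℝ) < (i:ℝ) := by
              have : 3 ≤ i := le_trans hN3 hNi
              exact_mod_cast by omega
            have hni : (n : ℝ) ≤ (i:ℝ) * (i:ℝ) := by
              have h1 : n < (s + 1) * (s + 1) := Nat.lt_succ_sqrt n
              have h2 : s + 1 ≤ i := le_trans (le_max_right _ _) hmi
              have : n ≤ i * i := by nlinarith
              exact_mod_cast this
            calc Real.log n ≤ Real.log ((i:ℝ) * i) := Real.log_le_log hn0 hni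
              _ = 2 * Real.log i := by rw [Real.log_mul (ne_of_gt hi0) (ne_of_gt hi0)]; ring
          have hlogi0 : (0:ℝ) ≤ Real.log i := by positivity
          calc ∑ j ∈ Finset.range i, dist (shiftZ^[j] (pt c)) (shiftZ^[j] (pt c'))
              ≤ (Bblk k : ℝ) + 2 + 2 * Real.log n := hsumb
            _ ≤ Real.log n + 2 + 2 * Real.log n := by rw [hn] at *; linarith
            _ ≤ 5 * Real.log n := by linarith
            _ < 13 * Real.log i := by linarith
            _ ≤ α i * t := h13i
        refine ⟨n, ?_, ?_⟩
        · have : Q ≤ k := le_max_left _ _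
          omega
        · -- PhiNA at n is ≥ 1 - ε
          have hsub : Finset.Icc m n ⊆ (Finset.Icc 1 n).filter
              (fun i => ∑ j ∈ Finset.range i, dist (shiftZ^[j] (pt c)) (shiftZ^[j] (pt c'))
                < α i * t) := by
            intro i hi
            rw [Finset.mem_Icc] at hi
            rw [Finset.mem_filter, Finset.mem_Icc]
            have hm1 : 1 ≤ m := by omega
            exact ⟨⟨by omega, hi.2⟩, hgood i hi.1 hi.2⟩
          set G := (Finset.Icc 1 n).filter
              (fun i => ∑ j ∈ Finset.range i, dist (shiftZ^[j] (pt c)) (shiftZ^[j] (pt c'))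
                < α i * t) with hGdef
          have hcard : (n + 1 - m : ℕ) ≤ G.card := by
            calc (n + 1 - m : ℕ) = (Finset.Icc m n).card := by rw [Nat.card_Icc]
              _ ≤ _ := Finset.card_le_card hsub
          unfold PhiNA
          rw [le_div_iff₀ hn0, ← hGdef]
          have hm1 : (m : ℝ) ≤ ε * n + 1 := by
            rcases max_cases N (s + 1) with ⟨he, -⟩ | ⟨he, -⟩ <;> rw [hm, he]
            · linarith
            · push_cast; linarith
          have hcard' : ((n:ℝ) + 1 - m) ≤ (G.card : ℝ) := by
            have he : ((n + 1 - m : ℕ) : ℝ) = (n:ℝ) + 1 - m := by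
              have hmn1 : m ≤ n + 1 := by omega
              push_cast [Nat.cast_sub hmn1]
              ring
            rw [← he]
            exact_mod_cast hcard
          have hexp : (1 - ε) * (n:ℝ) = (n:ℝ) - ε * n := by ring
          rw [hexp]
          linarith
      have h1 : 1 - ε ≤ PhiSupA shiftZ (pt c) (pt c') t α := by
        unfold PhiSupA
        exact le_limsup_of_frequently_le hfreq
          (isBoundedUnder_of ⟨1, fun n => PhiNA_le_one _ _ _ _ _ _⟩)
      linarith

end P2C


theorem twoSided_shift_alphaDC1
    [MetricSpace (ℤ → Fin 2)]
    (hdist : ∀ ω γ : ℤ → Fin 2, ω ≠ γ →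
      dist ω γ = sSup {r : ℝ | ∃ n : ℤ, ω n ≠ γ n ∧ r = 1 / (|(n : ℝ)| + 1)}) :
    (∀ α : ℕ → ℝ, MemA α →
      (Filter.IsBoundedUnder (· ≤ ·) Filter.atTop fun n : ℕ => α n / Real.log n) →
      ∀ x y : ℤ → Fin 2, ¬ ADC1Scrambled shiftZ α x y) ∧
    (∀ α : ℕ → ℝ, MemA α →
      Tendsto (fun n : ℕ => α n / Real.log n) atTop atTop →
      ∃ S : Set (ℤ → Fin 2), ¬ S.Countable ∧
        ∀ x ∈ S, ∀ y ∈ S, x ≠ y → ADC1Scrambled shiftZ α x y) := by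
  
  constructor
  · intro α hα hbd x y
    exact part1 hdist α hα hbd x y
  · intro α hα htend
    refine ⟨Set.range pt, ?_, ?_⟩
    · -- uncountability
      intro hcnt
      have hsub : Countable ↥(Set.range pt) := hcnt.to_subtype
      have hinj : Function.Injective pt := by
        intro c c' he
        by_contra hne
        obtain ⟨i, hi⟩ := Function.ne_iff.mp hne
        set k := Nat.pair i 0 with hk
        have hblk : inBlk k ((Ablk k : ℤ)) :=
          ⟨le_refl _, by exact_mod_cast Ablk_lt_Bblk k⟩
        have hne2 : pt c ((Ablk k : ℤ)) ≠ pt c' ((Ablk k : ℤ)) :=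
          pt_ne_iff.mpr ⟨k, hblk, by rw [hk, Nat.unpair_pair]; exact hi⟩
        exact hne2 (congrFun he _)
      have hinj2 : Function.Injective
          (fun c => (⟨pt c, Set.mem_range_self c⟩ : ↥(Set.range pt))) :=
        fun a b h => hinj (congrArg Subtype.val h)
      exact not_countable_funBool hinj2.countable
    · rintro x ⟨c, rfl⟩ y ⟨c', rfl⟩ hxy
      have hc : c ≠ c' := fun e => hxy (by rw [e])
      obtain ⟨i, hi⟩ := Function.ne_iff.mp hc
      apply part2scrambled hdist α htend
      intro N
      exact ⟨Nat.pair i N, Nat.right_le_pair i N, by rw [Nat.unpair_pair]; exact hi⟩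
end
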